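/- arXiv:1109.4138 — 2 statements merged into one kernel-verified Lean document; each statement's English description precedes it below -/
import Mathlib

section
/- Under the same assumptions, P[ζ(τ) ≥ n] ~ θ p_1(0)/(n^{1/θ} h(n)) as n → ∞. In particular P[ζ(τ) ≥ n]/(n P[ζ(τ)=n]) → θ. -/
open Filter

/-- A positive measurable function is slowly varying if it is eventually positive
and h(tx)/h(x) → 1 as x → ∞ for all t > 0. -/
def SlowlyVarying (h : ℝ → ℝ) : Prop :=
  (∀ᶠ x in atTop, 0 < h x) ∧
    ∀ t : ℝ, 0 < t → Tendsto (fun x => h (t * x) / h x) atTop (nhds 1)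

section Aux
open MeasureTheory Set

lemma uct (g : ℝ → ℝ) (hg : Measurable g) (x₀ : ℝ) (hpos : ∀ x ≥ x₀, 0 < g x)
    (hsv : ∀ a : ℝ, Tendsto (fun x => g (x + a) / g x) atTop (nhds 1))
    {δ : ℝ} (hδ : 0 < δ) :
    ∀ᶠ x in atTop, ∀ u ∈ Icc (0:ℝ) 1, |g (x + u) / g x - 1| ≤ δ := by
  by_contra hc
  rw [Filter.not_eventually] at hc
  set δ' : ℝ := min δ 1 / 3 with hδ'def
  have hδ'pos : 0 < δ' := by positivity
  have hδ'le : δ' ≤ δ / 3 := by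
    have := min_le_left δ 1; simp only [hδ'def]; linarith
  have hδ'le3 : δ' ≤ 1 / 3 := by
    have := min_le_right δ 1; simp only [hδ'def]; linarith
  -- choose bad sequence
  have hseq : ∀ n : ℕ, ∃ x, (x ≥ max (n : ℝ) x₀) ∧
      ∃ u ∈ Icc (0:ℝ) 1, ¬ |g (x + u) / g x - 1| ≤ δ := by
    intro n
    rcases frequently_atTop.1 hc (max (n : ℝ) x₀) with ⟨x, hx, hxp⟩
    push_neg at hxp
    obtain ⟨u, hu, hu2⟩ := hxp
    exact ⟨x, hx, u, hu, not_le.2 hu2⟩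
  choose xs hxs us hus hbad using hseq
  have hxs0 : ∀ n, x₀ ≤ xs n := fun n => le_trans (le_max_right _ _) (hxs n)
  have hxstop : Tendsto xs atTop atTop := by
    apply tendsto_atTop_mono (f := fun n : ℕ => (n : ℝ))
    · intro n; exact le_trans (le_max_left _ _) (hxs n)
    · exact tendsto_natCast_atTop_atTop
  set ys : ℕ → ℝ := fun n => xs n + us n with hysdef
  have hystop : Tendsto ys atTop atTop := by
    apply tendsto_atTop_mono (f := xs) _ hxstop
    intro n; simp only [hysdef]; linarith [(hus n).1]
  have hys0 : ∀ n, x₀ ≤ ys n := fun n => le_trans (hxs0 n) (by simp [hysdef]; linarith [(hus n).1])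
  -- the bad sets
  set A : ℕ → Set ℝ := fun n => {u | δ' ≤ |g (xs n + u) / g (xs n) - 1|} ∩ Icc 0 2 with hAdef
  set C : ℕ → Set ℝ := fun n => {w | δ' ≤ |g (ys n + w) / g (ys n) - 1|} ∩ Icc (-1) 2 with hCdef
  have hmeas : ∀ (zs : ℕ → ℝ) (a b : ℝ) (n : ℕ),
      MeasurableSet ({u : ℝ | δ' ≤ |g (zs n + u) / g (zs n) - 1|} ∩ Icc a b) := by
    intro zs a b n
    apply MeasurableSet.inter _ measurableSet_Icc
    apply measurableSet_le measurable_const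
    exact ((hg.comp (measurable_const.add measurable_id)).div_const _).sub_const _ |>.abs
  have hAmeas : ∀ n, MeasurableSet (A n) := fun n => hmeas xs 0 2 n
  have hCmeas : ∀ n, MeasurableSet (C n) := fun n => hmeas ys (-1) 2 n
  -- measure of bad sets tends to 0
  have key : ∀ (zs : ℕ → ℝ) (a b : ℝ), Tendsto zs atTop atTop →
      Tendsto (fun n => volume ({u : ℝ | δ' ≤ |g (zs n + u) / g (zs n) - 1|} ∩ Icc a b))
        atTop (nhds 0) := by
    intro zs a b hzs
    have h0 : (0 : ENNReal) = volume (∅ : Set ℝ) := by simp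
    rw [h0]
    apply tendsto_measure_of_ae_tendsto_indicator atTop MeasurableSet.empty (hmeas zs a b)
      (measurableSet_Icc (a := a) (b := b))
    · rw [Real.volume_Icc]; exact ENNReal.ofReal_ne_top
    · filter_upwards with n; exact inter_subset_right
    · filter_upwards with u
      simp only [mem_empty_iff_false, iff_false]
      have ht : Tendsto (fun n => g (zs n + u) / g (zs n)) atTop (nhds 1) := by
        have := (hsv u).comp hzs
        exact this
      have := Metric.tendsto_nhds.1 ht δ' hδ'pos
      filter_upwards [this] with n hn
      rw [Real.dist_eq] at hn
      intro hmem
      exact absurd hmem.1 (by simpa using not_le.2 hn)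
  have hAvol := key xs 0 2 hxstop
  have hCvol := key ys (-1) 2 hystop
  -- covering claim
  have hcover : ∀ n, Icc (0:ℝ) 2 ⊆ A n ∪ ((fun w => w + us n) '' C n) := by
    intro n u huI
    by_contra hnot
    simp only [mem_union, not_or] at hnot
    obtain ⟨hnA, hnC⟩ := hnot
    have huA : ¬ δ' ≤ |g (xs n + u) / g (xs n) - 1| := by
      intro hle; exact hnA ⟨hle, huI⟩
    have huC : ¬ δ' ≤ |g (ys n + (u - us n)) / g (ys n) - 1| := by
      intro hle
      apply hnC
      refine ⟨u - us n, ⟨hle, ?_⟩, by ring⟩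
      constructor
      · have h1 := (hus n).2; have h2 := huI.1; linarith
      · have h1 := (hus n).1; have h2 := huI.2; linarith
    push_neg at huA huC
    -- derive contradiction with hbad n
    have hP : 0 < g (xs n + u) := hpos _ (by linarith [hxs0 n, huI.1])
    have hX : 0 < g (xs n) := hpos _ (hxs0 n)
    have hY : 0 < g (ys n) := hpos _ (hys0 n)
    have heq : ys n + (u - us n) = xs n + u := by simp only [hysdef]; ring
    rw [heq] at huC
    set p := g (xs n + u)
    set x := g (xs n)
    set y := g (ys n)
    have hb : (2:ℝ)/3 ≤ p / y := by
      have : |p / y - 1| < δ' := huC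
      have := abs_lt.1 this
      linarith [this.1]
    have hgoal : |g (ys n) / g (xs n) - 1| ≤ δ := by
      have hyx : y / x = (p / x) / (p / y) := by
        field_simp
      rw [hyx]
      have h1 : |p / x - 1| < δ' := huA
      have h2 : |p / y - 1| < δ' := huC
      have hpos2 : 0 < p / y := by linarith
      have hEq : p / x / (p / y) - 1 = (p / x - p / y) / (p / y) := by
        field_simp
      rw [hEq, abs_div, abs_of_pos hpos2]
      have hnum : |p / x - p / y| ≤ 2 * δ' := by
        calc |p / x - p / y| = |(p/x - 1) - (p/y - 1)| := by ring_nf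
          _ ≤ |p/x - 1| + |p/y - 1| := abs_sub _ _
          _ ≤ 2 * δ' := by linarith
      calc |p / x - p / y| / (p / y) ≤ 2 * δ' / (2/3) :=
            div_le_div₀ (by positivity) hnum (by norm_num) hb
          _ ≤ δ := by linarith
    have hbad' := hbad n
    have : g (xs n + us n) = g (ys n) := by simp [hysdef]
    rw [this] at hbad'
    exact hbad' hgoal
  -- volume contradiction
  have hvol : ∀ n, (2 : ENNReal) ≤ volume (A n) + volume (C n) := by
    intro n
    have h1 : volume (Icc (0:ℝ) 2) ≤ volume (A n ∪ ((fun w => w + us n) '' C n)) :=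
      measure_mono (hcover n)
    have h2 : volume ((fun w => w + us n) '' C n) = volume (C n) := by
      rw [Set.image_add_right, measure_preimage_add_right]
    have h3 : volume (Icc (0:ℝ) 2) = 2 := by
      rw [Real.volume_Icc]; norm_num
    calc (2:ENNReal) = volume (Icc (0:ℝ) 2) := h3.symm
      _ ≤ volume (A n ∪ _) := h1
      _ ≤ volume (A n) + volume ((fun w => w + us n) '' C n) := measure_union_le _ _
      _ = volume (A n) + volume (C n) := by rw [h2]
  have hsmall : ∀ᶠ n in atTop, volume (A n) < 1 ∧ volume (C n) < 1 := by
    have h1 := hAvol (Iio_mem_nhds (by norm_num : (0:ENNReal) < 1))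
    have h2 := hCvol (Iio_mem_nhds (by norm_num : (0:ENNReal) < 1))
    filter_upwards [h1, h2] with n hn1 hn2
    exact ⟨hn1, hn2⟩
  obtain ⟨n, hn1, hn2⟩ := hsmall.exists
  have := hvol n
  have : (2:ENNReal) < 2 := lt_of_le_of_lt this (by
    calc volume (A n) + volume (C n) < 1 + 1 := ENNReal.add_lt_add hn1 hn2
      _ = 2 := by norm_num)
  exact lt_irrefl _ this

lemma exp_neg_two_le {δ : ℝ} (h0 : 0 ≤ δ) (h2 : δ ≤ 1/2) : Real.exp (-(2*δ)) ≤ 1 - δ := by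
  have h1 : 1 + 2*δ ≤ Real.exp (2*δ) := by
    have := Real.add_one_le_exp (2*δ); linarith
  rw [Real.exp_neg, inv_le_iff_one_le_mul₀ (Real.exp_pos _)]
  nlinarith [Real.exp_pos (2*δ)]

lemma potter (h : ℝ → ℝ) (hh : Measurable h) (hs : SlowlyVarying h)
    {δ : ℝ} (hδ : 0 < δ) (hδ2 : δ ≤ 1/2) :
    ∃ X : ℝ, 1 ≤ X ∧ (∀ x ≥ X, 0 < h x) ∧
      ∀ x ≥ X, ∀ t ≥ (1:ℝ),
        h (t * x) ≤ (1+δ) * t ^ δ * h x ∧ (1-δ) * t ^ (-(2*δ)) * h x ≤ h (t * x) := by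
  obtain ⟨x₁, hx₁⟩ := (hs.1.and (eventually_ge_atTop (1:ℝ))).exists_forall_of_atTop
  -- g in additive coordinates
  set g : ℝ → ℝ := fun y => h (Real.exp y) with hgdef
  have hgm : Measurable g := hh.comp Real.measurable_exp
  have hgpos : ∀ y ≥ max x₁ 0, 0 < g y := by
    intro y hy
    apply (hx₁ (Real.exp y) _).1
    calc x₁ ≤ max x₁ 0 := le_max_left _ _
      _ ≤ y := hy
      _ ≤ Real.exp y := by linarith [Real.add_one_le_exp y]
  have hgsv : ∀ a : ℝ, Tendsto (fun y => g (y + a) / g y) atTop (nhds 1) := by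
    intro a
    have := (hs.2 (Real.exp a) (Real.exp_pos a)).comp Real.tendsto_exp_atTop
    apply this.congr
    intro y
    simp only [Function.comp_apply, hgdef, Real.exp_add]
    ring_nf
  -- uniform bound on [1, e]
  obtain ⟨Y, hY⟩ := (uct g hgm (max x₁ 0) hgpos hgsv hδ).exists_forall_of_atTop
  set X : ℝ := max (Real.exp (max Y (max x₁ 0))) 1 with hXdef
  have hX1 : 1 ≤ X := le_max_right _ _
  have hXpos : ∀ x ≥ X, 0 < h x := by
    intro x hx
    apply (hx₁ x _).1
    calc x₁ ≤ max x₁ 0 := le_max_left _ _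
      _ ≤ Real.exp (max Y (max x₁ 0)) := by
          linarith [Real.add_one_le_exp (max Y (max x₁ 0)), le_max_right Y (max x₁ 0)]
      _ ≤ X := le_max_left _ _
      _ ≤ x := hx
  refine ⟨X, hX1, hXpos, ?_⟩
  -- base estimate for s ∈ [1, e]
  have base : ∀ x ≥ X, ∀ s ∈ Icc (1:ℝ) (Real.exp 1),
      (1-δ) * h x ≤ h (s * x) ∧ h (s * x) ≤ (1+δ) * h x := by
    intro x hx s hs'
    have hx0 : (0:ℝ) < x := lt_of_lt_of_le one_pos (hX1.trans hx)
    have hs0 : (0:ℝ) < s := lt_of_lt_of_le one_pos hs'.1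
    have hy : Real.log x ≥ max Y (max x₁ 0) := by
      have : Real.exp (max Y (max x₁ 0)) ≤ x := le_trans (le_max_left _ _) hx
      calc max Y (max x₁ 0) = Real.log (Real.exp (max Y (max x₁ 0))) := (Real.log_exp _).symm
        _ ≤ Real.log x := Real.log_le_log (Real.exp_pos _) this
    have hu : Real.log s ∈ Icc (0:ℝ) 1 := by
      constructor
      · exact Real.log_nonneg hs'.1
      · calc Real.log s ≤ Real.log (Real.exp 1) := Real.log_le_log hs0 hs'.2
          _ = 1 := Real.log_exp 1
    have hbd := hY (Real.log x) (le_trans (le_max_left _ _) hy) (Real.log s) hu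
    have hgx : g (Real.log x) = h x := by simp only [hgdef]; rw [Real.exp_log hx0]
    have hgsx : g (Real.log x + Real.log s) = h (s * x) := by
      simp only [hgdef]
      rw [Real.exp_add, Real.exp_log hx0, Real.exp_log hs0, mul_comm]
    rw [hgsx, hgx] at hbd
    have hhx : 0 < h x := hXpos x hx
    rw [abs_le] at hbd
    constructor
    · have := hbd.1
      have h2 : (1 - δ) ≤ h (s*x) / h x := by linarith
      calc (1-δ) * h x ≤ (h (s*x) / h x) * h x := by
            exact mul_le_mul_of_nonneg_right h2 hhx.le
        _ = h (s*x) := by field_simp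
    · have := hbd.2
      have h2 : h (s*x) / h x ≤ 1 + δ := by linarith
      calc h (s*x) = (h (s*x) / h x) * h x := by field_simp
        _ ≤ (1+δ) * h x := mul_le_mul_of_nonneg_right h2 hhx.le
  -- chaining
  have hexp1 : (1:ℝ) ≤ Real.exp 1 := by linarith [Real.add_one_le_exp 1]
  have chain : ∀ m : ℕ, ∀ x ≥ X,
      (1-δ)^m * h x ≤ h (Real.exp 1 ^ m * x) ∧ h (Real.exp 1 ^ m * x) ≤ (1+δ)^m * h x := by
    intro m
    induction m with
    | zero => intro x hx; simp
    | succ m ih =>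
      intro x hx
      have hxm : Real.exp 1 ^ m * x ≥ X := by
        have h1 : (1:ℝ) ≤ Real.exp 1 ^ m := one_le_pow₀ hexp1
        nlinarith [hX1.trans hx]
      have hbase := base (Real.exp 1 ^ m * x) hxm (Real.exp 1) ⟨hexp1, le_refl _⟩
      have hih := ih x hx
      have heq : Real.exp 1 * (Real.exp 1 ^ m * x) = Real.exp 1 ^ (m+1) * x := by ring
      rw [heq] at hbase
      have hd1 : (0:ℝ) ≤ (1-δ) := by linarith
      have hd2 : (0:ℝ) ≤ (1+δ) := by linarith
      constructor
      · calc (1-δ)^(m+1) * h x = (1-δ) * ((1-δ)^m * h x) := by ring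
          _ ≤ (1-δ) * h (Real.exp 1 ^ m * x) := by
              exact mul_le_mul_of_nonneg_left hih.1 hd1
          _ ≤ h (Real.exp 1 ^ (m+1) * x) := hbase.1
      · calc h (Real.exp 1 ^ (m+1) * x) ≤ (1+δ) * h (Real.exp 1 ^ m * x) := hbase.2
          _ ≤ (1+δ) * ((1+δ)^m * h x) := mul_le_mul_of_nonneg_left hih.2 hd2
          _ = (1+δ)^(m+1) * h x := by ring
  -- final Potter bound
  intro x hx t ht
  have hx0 : (0:ℝ) < x := lt_of_lt_of_le one_pos (hX1.trans hx)
  have ht0 : (0:ℝ) < t := lt_of_lt_of_le one_pos ht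
  have hlt : (0:ℝ) ≤ Real.log t := Real.log_nonneg ht
  set m : ℕ := ⌊Real.log t⌋₊ with hmdef
  have hm1 : (m:ℝ) ≤ Real.log t := Nat.floor_le hlt
  have hm2 : Real.log t < m + 1 := Nat.lt_floor_add_one _
  have hem : Real.exp 1 ^ m = Real.exp m := by
    rw [← Real.exp_nat_mul]; norm_num
  have hemle : Real.exp 1 ^ m ≤ t := by
    rw [hem]
    calc Real.exp (m:ℝ) ≤ Real.exp (Real.log t) := Real.exp_le_exp.2 hm1
      _ = t := Real.exp_log ht0
  have hempos : (0:ℝ) < Real.exp 1 ^ m := pow_pos (Real.exp_pos 1) m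
  set s : ℝ := t / Real.exp 1 ^ m with hsdef
  have hs1 : (1:ℝ) ≤ s := (one_le_div hempos).2 hemle
  have hs2 : s ≤ Real.exp 1 := by
    rw [hsdef, div_le_iff₀ hempos, hem]
    have h5 : t < Real.exp ((m:ℝ) + 1) := by
      calc t = Real.exp (Real.log t) := (Real.exp_log ht0).symm
        _ < Real.exp ((m:ℝ)+1) := Real.exp_lt_exp.2 hm2
    have h6 : Real.exp 1 * Real.exp (m:ℝ) = Real.exp ((m:ℝ)+1) := by
      rw [← Real.exp_add]; ring_nf
    linarith
  have hxm : Real.exp 1 ^ m * x ≥ X := by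
    have h1 : (1:ℝ) ≤ Real.exp 1 ^ m := one_le_pow₀ hexp1
    nlinarith [hX1.trans hx]
  have htx : t * x = s * (Real.exp 1 ^ m * x) := by
    rw [hsdef]; field_simp
  have hbase := base (Real.exp 1 ^ m * x) hxm s ⟨hs1, hs2⟩
  rw [← htx] at hbase
  have hchain := chain m x hx
  have hhx : 0 < h x := hXpos x hx
  -- power comparisons
  have hup : ((1:ℝ)+δ)^m ≤ t ^ δ := by
    have h1 : ((1:ℝ)+δ)^m ≤ Real.exp δ ^ m := by
      apply pow_le_pow_left₀ (by linarith)
      linarith [Real.add_one_le_exp δ]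
    have h2 : Real.exp δ ^ m = Real.exp (δ * m) := by
      rw [← Real.exp_nat_mul]; ring_nf
    have h3 : Real.exp (δ * m) ≤ Real.exp (δ * Real.log t) := by
      apply Real.exp_le_exp.2
      exact mul_le_mul_of_nonneg_left hm1 hδ.le
    have h4 : t ^ δ = Real.exp (δ * Real.log t) := by
      rw [Real.rpow_def_of_pos ht0]; ring_nf
    rw [h4]
    exact (h1.trans_eq h2).trans h3
  have hdown : t ^ (-(2*δ)) ≤ ((1:ℝ)-δ)^m := by
    have h1 : Real.exp (-(2*δ)) ^ m ≤ ((1:ℝ)-δ)^m := by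
      apply pow_le_pow_left₀ (Real.exp_pos _).le
      exact exp_neg_two_le hδ.le hδ2
    have h2 : Real.exp (-(2*δ)) ^ m = Real.exp (-(2*δ) * m) := by
      rw [← Real.exp_nat_mul]; ring_nf
    have h3 : Real.exp (-(2*δ) * Real.log t) ≤ Real.exp (-(2*δ) * m) := by
      apply Real.exp_le_exp.2
      nlinarith
    have h4 : t ^ (-(2*δ)) = Real.exp (-(2*δ) * Real.log t) := by
      rw [Real.rpow_def_of_pos ht0]; ring_nf
    rw [h4]
    exact (h3.trans_eq h2.symm).trans h1
  constructor
  · calc h (t * x) ≤ (1+δ) * h (Real.exp 1 ^ m * x) := hbase.2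
      _ ≤ (1+δ) * ((1+δ)^m * h x) := by
          exact mul_le_mul_of_nonneg_left hchain.2 (by linarith)
      _ ≤ (1+δ) * (t ^ δ * h x) := by
          apply mul_le_mul_of_nonneg_left _ (by linarith)
          exact mul_le_mul_of_nonneg_right hup hhx.le
      _ = (1+δ) * t ^ δ * h x := by ring
  · calc (1-δ) * t ^ (-(2*δ)) * h x = (1-δ) * (t ^ (-(2*δ)) * h x) := by ring
      _ ≤ (1-δ) * ((1-δ)^m * h x) := by
          apply mul_le_mul_of_nonneg_left _ (by linarith)
          exact mul_le_mul_of_nonneg_right hdown hhx.le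
      _ = (1-δ) * (1-δ)^m * h x := by ring
      _ ≤ (1-δ) * h (Real.exp 1 ^ m * x) * 1 := by
          rw [mul_one]
          calc (1-δ) * (1-δ)^m * h x = (1-δ) * ((1-δ)^m * h x) := by ring
            _ ≤ (1-δ) * h (Real.exp 1 ^ m * x) := mul_le_mul_of_nonneg_left hchain.1 (by linarith)
      _ = (1-δ) * h (Real.exp 1 ^ m * x) := mul_one _
      _ ≤ h (t * x) := hbase.1

lemma summable_shift {β : ℝ} (hβ : 0 < β) (n : ℕ) :
    Summable (fun k : ℕ => ((n + k : ℕ):ℝ) ^ (-(1+β))) := by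
  have hbase : Summable (fun k : ℕ => ((k:ℕ):ℝ) ^ (-(1+β))) :=
    Real.summable_nat_rpow.2 (by linarith)
  have := (summable_nat_add_iff (f := fun k : ℕ => ((k:ℕ):ℝ) ^ (-(1+β))) n).2 hbase
  apply this.congr
  intro k
  simp [Nat.add_comm]

-- MVT step: for 1 ≤ a, bounds on F a - F (a+1) where F x = x^(-β)/β
lemma mvt_step {β : ℝ} (hβ : 0 < β) {a : ℝ} (ha : 1 ≤ a) :
    (a+1) ^ (-(1+β)) ≤ a ^ (-β) / β - (a+1) ^ (-β) / β ∧
    a ^ (-β) / β - (a+1) ^ (-β) / β ≤ a ^ (-(1+β)) := by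
  have ha0 : (0:ℝ) < a := lt_of_lt_of_le one_pos ha
  set F : ℝ → ℝ := fun x => x ^ (-β) / β with hF
  have hcont : ContinuousOn F (Icc a (a+1)) := by
    intro x hx
    have hx0 : x ≠ 0 := by have := hx.1; intro hh; rw [hh] at this; linarith
    exact ((Real.continuousAt_rpow_const x (-β) (Or.inl hx0)).div_const β).continuousWithinAt
  have hderiv : ∀ x ∈ Ioo a (a+1), HasDerivAt F (-(x ^ (-(1+β)))) x := by
    intro x hx
    have hx0 : x ≠ 0 := by have := hx.1; intro hh; rw [hh] at this; linarith
    have h1 : HasDerivAt (fun x : ℝ => x ^ (-β)) ((-β) * x ^ (-β - 1)) x :=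
      Real.hasDerivAt_rpow_const (Or.inl hx0)
    have h2 := h1.div_const β
    have he : (-β) * x ^ (-β - 1) / β = -(x ^ (-(1+β))) := by
      have : -β - 1 = -(1+β) := by ring
      rw [this]
      field_simp
    rwa [he] at h2
  obtain ⟨c, hc, hceq⟩ := exists_hasDerivAt_eq_slope F (fun x => -(x ^ (-(1+β))))
    (by linarith : a < a + 1) hcont hderiv
  have hslope : F a - F (a+1) = c ^ (-(1+β)) := by
    have : (F (a+1) - F a) / (a + 1 - a) = F (a+1) - F a := by norm_num
    rw [this] at hceq
    linarith [hceq]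
  rw [hF] at hslope
  simp only at hslope
  rw [hslope]
  have hc1 : a ≤ c := hc.1.le
  have hc2 : c ≤ a + 1 := hc.2.le
  constructor
  · exact Real.rpow_le_rpow_of_nonpos (by linarith [hc.1]) hc2 (by linarith)
  · exact Real.rpow_le_rpow_of_nonpos ha0 hc1 (by linarith)

lemma tail_bounds {β : ℝ} (hβ : 0 < β) {n : ℕ} (hn : 2 ≤ n) :
    (n:ℝ) ^ (-β) / β ≤ (∑' k : ℕ, ((n + k : ℕ):ℝ) ^ (-(1+β))) ∧
    (∑' k : ℕ, ((n + k : ℕ):ℝ) ^ (-(1+β))) ≤ ((n:ℝ) - 1) ^ (-β) / β := by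
  have hsum := summable_shift hβ n
  have hn1 : (1:ℝ) ≤ (n:ℝ) - 1 := by
    have : (2:ℝ) ≤ (n:ℝ) := by exact_mod_cast hn
    linarith
  have hnn : (0:ℝ) < n := by linarith
  set F : ℝ → ℝ := fun x => x ^ (-β) / β with hF
  constructor
  · -- lower bound
    have hstep : ∀ M : ℕ, F (n:ℝ) - F ((n:ℝ) + M) ≤ ∑ k ∈ Finset.range M, ((n + k : ℕ):ℝ) ^ (-(1+β)) := by
      intro M
      have htel : ∑ k ∈ Finset.range M, (F ((n:ℝ) + k) - F ((n:ℝ) + (k+1))) = F ((n:ℝ)+0) - F ((n:ℝ)+M) := by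
        have := Finset.sum_range_sub' (fun k : ℕ => F ((n:ℝ) + k)) M
        simpa using this
      calc F (n:ℝ) - F ((n:ℝ) + M) = ∑ k ∈ Finset.range M, (F ((n:ℝ) + k) - F ((n:ℝ) + (k+1))) := by
            rw [htel]; norm_num
        _ ≤ ∑ k ∈ Finset.range M, ((n + k : ℕ):ℝ) ^ (-(1+β)) := by
            apply Finset.sum_le_sum
            intro k _
            have ha : (1:ℝ) ≤ (n:ℝ) + k := by
              have : (0:ℝ) ≤ (k:ℕ) := Nat.cast_nonneg k
              linarith
            have := (mvt_step hβ ha).2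
            have hcast : ((n + k : ℕ):ℝ) = (n:ℝ) + k := by push_cast; ring
            rw [hcast]
            calc F ((n:ℝ)+k) - F ((n:ℝ)+(k+1)) = ((n:ℝ)+k) ^ (-β)/β - (((n:ℝ)+k)+1) ^ (-β)/β := by
                  simp only [hF]; ring_nf
              _ ≤ ((n:ℝ)+k) ^ (-(1+β)) := this
    have hlim : Tendsto (fun M : ℕ => F (n:ℝ) - F ((n:ℝ) + M)) atTop (nhds (F (n:ℝ))) := by
      have h1 : Tendsto (fun M : ℕ => ((n:ℝ) + M)) atTop atTop :=
        tendsto_atTop_add_const_left _ _ tendsto_natCast_atTop_atTop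
      have h2 : Tendsto (fun x : ℝ => x ^ (-β)) atTop (nhds 0) := tendsto_rpow_neg_atTop hβ
      have h3 : Tendsto (fun M : ℕ => ((n:ℝ) + M) ^ (-β) / β) atTop (nhds 0) := by
        have := (h2.comp h1).div_const β
        simpa using this
      have h4 : Tendsto (fun M : ℕ => F (n:ℝ) - ((n:ℝ) + M) ^ (-β) / β) atTop
          (nhds (F (n:ℝ) - 0)) := tendsto_const_nhds.sub h3
      simp only [sub_zero] at h4
      exact h4
    apply le_of_tendsto hlim
    filter_upwards with M
    exact le_trans (hstep M) (Summable.sum_le_tsum _ (fun i _ => Real.rpow_nonneg (Nat.cast_nonneg _) _) hsum)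
  · -- upper bound
    apply Summable.tsum_le_of_sum_range_le hsum
    intro M
    have htel : ∑ k ∈ Finset.range M, (F ((n:ℝ) - 1 + k) - F ((n:ℝ) - 1 + (k+1))) = F ((n:ℝ)-1+0) - F ((n:ℝ)-1+M) := by
      have := Finset.sum_range_sub' (fun k : ℕ => F ((n:ℝ) - 1 + k)) M
      simpa using this
    calc ∑ i ∈ Finset.range M, ((n + i : ℕ):ℝ) ^ (-(1+β))
        ≤ ∑ k ∈ Finset.range M, (F ((n:ℝ) - 1 + k) - F ((n:ℝ) - 1 + (k+1))) := by
          apply Finset.sum_le_sum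
          intro k _
          have hk0 : (0:ℝ) ≤ (k:ℝ) := Nat.cast_nonneg k
          have ha : (1:ℝ) ≤ (n:ℝ) - 1 + k := by linarith
          have hstep := (mvt_step hβ ha).1
          have hcast : ((n + k : ℕ):ℝ) = ((n:ℝ) - 1 + k) + 1 := by push_cast; ring
          rw [hcast]
          calc (((n:ℝ)-1+k)+1) ^ (-(1+β)) ≤ ((n:ℝ)-1+k)^(-β)/β - (((n:ℝ)-1+k)+1)^(-β)/β := hstep
            _ = F ((n:ℝ)-1+k) - F ((n:ℝ)-1+(k+1)) := by simp only [hF]; ring_nf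
      _ = F ((n:ℝ)-1+0) - F ((n:ℝ)-1+M) := htel
      _ ≤ (↑n - 1) ^ (-β) / β := by
          have hM0 : (0:ℝ) ≤ (M:ℝ) := Nat.cast_nonneg M
          have h0 : 0 ≤ F ((n:ℝ)-1+M) :=
            div_nonneg (Real.rpow_nonneg (by linarith) _) hβ.le
          have h1 : F ((n:ℝ)-1+0) = (↑n - 1) ^ (-β) / β := by norm_num [hF]
          linarith

lemma tailsum {β : ℝ} (hβ : 0 < β) :
    Tendsto (fun n : ℕ => (n:ℝ) ^ β * ∑' k : ℕ, ((n + k : ℕ):ℝ) ^ (-(1+β)))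
      atTop (nhds (1/β)) := by
  apply tendsto_of_tendsto_of_tendsto_of_le_of_le'
    (g := fun _ : ℕ => 1/β)
    (h := fun n : ℕ => ((n:ℝ)/((n:ℝ)-1)) ^ β / β)
  · exact tendsto_const_nhds
  · -- upper bound sequence tends to 1/β
    have h1 : Tendsto (fun n : ℕ => (n:ℝ)/((n:ℝ)-1)) atTop (nhds 1) := by
      have h2 : Tendsto (fun n : ℕ => 1 + 1/((n:ℝ)-1)) atTop (nhds 1) := by
        have h3 : Tendsto (fun n : ℕ => (n:ℝ) - 1) atTop atTop :=
          tendsto_atTop_add_const_right _ _ tendsto_natCast_atTop_atTop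
        have h4 := h3.inv_tendsto_atTop
        have := tendsto_const_nhds (x := (1:ℝ)) (f := atTop (α := ℕ)) |>.add h4
        simpa [one_div] using this
      apply h2.congr'
      filter_upwards [eventually_ge_atTop 2] with n hn
      have h5 : (1:ℝ) ≤ (n:ℝ) - 1 := by
        have : (2:ℝ) ≤ (n:ℝ) := by exact_mod_cast hn
        linarith
      field_simp; ring
    have h6 : ContinuousAt (fun x : ℝ => x ^ β) 1 :=
      Real.continuousAt_rpow_const 1 β (Or.inl one_ne_zero)
    have h7 := (h6.tendsto.comp h1).div_const β
    simp only [Real.one_rpow, Function.comp] at h7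
    exact h7
  · filter_upwards [eventually_ge_atTop 2] with n hn
    have hb := (tail_bounds hβ hn).1
    have hnn : (0:ℝ) < (n:ℝ) := by
      have : (2:ℝ) ≤ (n:ℝ) := by exact_mod_cast hn
      linarith
    have hpow : (0:ℝ) < (n:ℝ) ^ β := Real.rpow_pos_of_pos hnn β
    have := mul_le_mul_of_nonneg_left hb hpow.le
    calc 1/β = (n:ℝ)^β * ((n:ℝ)^(-β)/β) := by
          rw [Real.rpow_neg hnn.le]
          field_simp
      _ ≤ (n:ℝ)^β * ∑' k : ℕ, ((n + k : ℕ):ℝ) ^ (-(1+β)) := this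
  · filter_upwards [eventually_ge_atTop 2] with n hn
    have hb := (tail_bounds hβ hn).2
    have h2n : (2:ℝ) ≤ (n:ℝ) := by exact_mod_cast hn
    have hnn : (0:ℝ) < (n:ℝ) := by linarith
    have hn1 : (0:ℝ) < (n:ℝ) - 1 := by linarith
    have hpow : (0:ℝ) < (n:ℝ) ^ β := Real.rpow_pos_of_pos hnn β
    have := mul_le_mul_of_nonneg_left hb hpow.le
    calc (n:ℝ)^β * ∑' k : ℕ, ((n + k : ℕ):ℝ) ^ (-(1+β))
        ≤ (n:ℝ)^β * (((n:ℝ)-1)^(-β)/β) := this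
      _ = ((n:ℝ)/((n:ℝ)-1)) ^ β / β := by
          rw [Real.div_rpow hnn.le hn1.le, Real.rpow_neg hn1.le]
          field_simp

lemma tsum_tail_eq (g : ℕ → ℝ) (n : ℕ) :
    (∑' k : {k : ℕ // n ≤ k}, g k.1) = ∑' k : ℕ, g (n + k) := by
  rw [← Equiv.tsum_eq (⟨fun k => ⟨n + k, Nat.le_add_right _ _⟩, fun k => k.1 - n,
     fun k => by simp, fun k => by apply Subtype.ext; simp; omega⟩ : ℕ ≃ {k : ℕ // n ≤ k})
     (fun k : {k : ℕ // n ≤ k} => g k.1)]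
  rfl

end Aux

set_option maxHeartbeats 2000000 in
open MeasureTheory Set in
/-- Tail asymptotics: if f(n) = P[ζ(τ) = n] satisfies f(n) ~ p_1(0)/(n^{1+1/θ}h(n))
with h slowly varying and θ ∈ (1,2], then P[ζ(τ) ≥ n] = ∑_{k≥n} f(k)
~ θ p_1(0)/(n^{1/θ} h(n)); in particular P[ζ(τ) ≥ n]/(n P[ζ(τ) = n]) → θ. -/
theorem stmt14 (θ : ℝ) (hθ1 : 1 < θ) (hθ2 : θ ≤ 2)
    (p1 : ℝ → ℝ) (hp10 : 0 < p1 0)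
    (h : ℝ → ℝ) (hhmeas : Measurable h) (hslow : SlowlyVarying h)
    (f : ℕ → ℝ) (hfnonneg : ∀ n, 0 ≤ f n)
    (hasymp : Tendsto (fun n : ℕ => f n / (p1 0 / ((n : ℝ) ^ (1 + 1 / θ) * h n)))
      atTop (nhds 1)) :
    Tendsto (fun n : ℕ => (∑' k : {k : ℕ // n ≤ k}, f k.1) /
        (θ * p1 0 / ((n : ℝ) ^ (1 / θ) * h n))) atTop (nhds 1) ∧
    Tendsto (fun n : ℕ => (∑' k : {k : ℕ // n ≤ k}, f k.1) / ((n : ℝ) * f n))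
      atTop (nhds θ) := by
  set c := p1 0 with hcdef
  have hc : 0 < c := hp10
  have hθ0 : (0:ℝ) < θ := by linarith
  set α : ℝ := 1/θ with hαdef
  have hα0 : 0 < α := by positivity
  have hα1 : α < 1 := by
    rw [hαdef]
    rw [div_lt_one hθ0]; linarith
  have hθα : θ * α = 1 := by rw [hαdef]; field_simp
  -- the key limit for the shifted sums
  have hmain : Tendsto (fun n : ℕ =>
      (∑' k : ℕ, f (n + k)) * ((n:ℝ) ^ α * h n) / (θ * c)) atTop (nhds 1) := by
    rw [Metric.tendsto_nhds]
    intro ε hε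
    -- choose δ small enough
    set U : ℝ → ℝ := fun δ => (1+δ)/((1-δ)*θ) * (1/(α-2*δ)) with hUdef
    set L : ℝ → ℝ := fun δ => (1-δ)/((1+δ)*θ) * (1/(α+δ)) with hLdef
    have hU0 : U 0 = 1 := by
      simp only [hUdef]
      rw [show ((1:ℝ)+0)/((1-0)*θ) * (1/(α-2*0)) = 1/(θ*α) by field_simp; ring_nf; field_simp, hθα]
      norm_num
    have hL0 : L 0 = 1 := by
      simp only [hLdef]
      rw [show ((1:ℝ)-0)/((1+0)*θ) * (1/(α+0)) = 1/(θ*α) by field_simp; ring_nf, hθα]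
      norm_num
    have hUc : ContinuousAt U 0 := by
      apply ContinuousAt.mul
      · apply ContinuousAt.div (by fun_prop) (by fun_prop)
        simp [hθ0.ne']
      · apply ContinuousAt.div (by fun_prop) (by fun_prop)
        simp [hα0.ne']
    have hLc : ContinuousAt L 0 := by
      apply ContinuousAt.mul
      · apply ContinuousAt.div (by fun_prop) (by fun_prop)
        simp [hθ0.ne']
      · apply ContinuousAt.div (by fun_prop) (by fun_prop)
        simp [hα0.ne']
    have hUt : Tendsto U (nhds 0) (nhds 1) := hU0 ▸ hUc.tendsto
    have hLt : Tendsto L (nhds 0) (nhds 1) := hL0 ▸ hLc.tendsto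
    have hUe : ∀ᶠ δ in nhds (0:ℝ), U δ < 1 + ε/2 := hUt.eventually_lt_const (by linarith)
    have hLe : ∀ᶠ δ in nhds (0:ℝ), 1 - ε/2 < L δ := hLt.eventually_const_lt (by linarith)
    have hsm : ∀ᶠ δ in nhds (0:ℝ), δ < min (1/2) (α/4) :=
      (continuous_id.tendsto (0:ℝ)).eventually_lt_const (by positivity)
    have hall : ∀ᶠ δ in nhdsWithin (0:ℝ) (Ioi 0),
        ((U δ < 1 + ε/2 ∧ 1 - ε/2 < L δ) ∧ δ < min (1/2) (α/4)) ∧ δ ∈ Ioi (0:ℝ) :=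
      (((hUe.and hLe).and hsm).filter_mono nhdsWithin_le_nhds).and eventually_mem_nhdsWithin
    obtain ⟨δ, ⟨⟨hδU, hδL⟩, hδsm⟩, hδpos'⟩ := hall.exists
    have hδpos : 0 < δ := hδpos'
    have hδ2 : δ ≤ 1/2 := le_of_lt (lt_of_lt_of_le hδsm (min_le_left _ _))
    have hδα : δ < α/4 := lt_of_lt_of_le hδsm (min_le_right _ _)
    have hδ1 : δ < 1 := by linarith
    have hβ₁ : 0 < α - 2*δ := by linarith
    have hβ₂ : 0 < α + δ := by linarith
    -- Potter bounds
    obtain ⟨X, hX1, hXpos, hpot⟩ := potter h hhmeas hslow hδpos hδ2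
    -- asymptotic bound
    obtain ⟨N₁, hN₁⟩ := eventually_atTop.1 (Metric.tendsto_nhds.1 hasymp δ hδpos)
    -- the key estimate
    have key : ∀ n : ℕ, N₁ ≤ n → X ≤ (n:ℝ) →
        ((∑' k : ℕ, f (n + k)) * ((n:ℝ) ^ α * h n) / (θ * c) ≤
          (1+δ)/((1-δ)*θ) * ((n:ℝ) ^ (α-2*δ) * ∑' k : ℕ, ((n + k : ℕ):ℝ) ^ (-(1+(α-2*δ))))) ∧
        ((1-δ)/((1+δ)*θ) * ((n:ℝ) ^ (α+δ) * ∑' k : ℕ, ((n + k : ℕ):ℝ) ^ (-(1+(α+δ)))) ≤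
          (∑' k : ℕ, f (n + k)) * ((n:ℝ) ^ α * h n) / (θ * c)) := by
      intro n hnN hnX
      have hnR1 : (1:ℝ) ≤ (n:ℝ) := le_trans hX1 hnX
      have hnRpos : (0:ℝ) < (n:ℝ) := by linarith
      have hhn : 0 < h (n:ℝ) := hXpos _ hnX
      set Ku : ℝ := (1+δ) * (c/((1-δ) * h (n:ℝ)) * (n:ℝ) ^ (-(2*δ))) with hKudef
      set Kl : ℝ := (1-δ) * (c/((1+δ) * h (n:ℝ)) * (n:ℝ) ^ δ) with hKldef
      have hterm : ∀ k : ℕ,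
          f (n+k) ≤ Ku * ((n + k : ℕ):ℝ) ^ (-(1+(α-2*δ))) ∧
          Kl * ((n + k : ℕ):ℝ) ^ (-(1+(α+δ))) ≤ f (n+k) := by
        intro k
        have hcast : ((n+k:ℕ):ℝ) = (n:ℝ) + (k:ℝ) := by push_cast; ring
        have hk0 : (0:ℝ) ≤ (k:ℝ) := Nat.cast_nonneg k
        have hmge : (n:ℝ) ≤ ((n+k:ℕ):ℝ) := by rw [hcast]; linarith
        have hmpos : (0:ℝ) < ((n+k:ℕ):ℝ) := lt_of_lt_of_le hnRpos hmge
        have hhm : 0 < h ((n+k:ℕ):ℝ) := hXpos _ (le_trans hnX hmge)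
        set mR := ((n+k:ℕ):ℝ) with hmRdef
        have ht1 : (1:ℝ) ≤ mR / (n:ℝ) := (one_le_div hnRpos).2 hmge
        have htpos : (0:ℝ) < mR / (n:ℝ) := lt_of_lt_of_le one_pos ht1
        have htn : (mR / (n:ℝ)) * (n:ℝ) = mR := by field_simp
        have hpotn := hpot (n:ℝ) hnX (mR / (n:ℝ)) ht1
        rw [htn] at hpotn
        obtain ⟨hpotU, hpotL⟩ := hpotn
        -- ratio bound at n+k
        have hρm := hN₁ (n+k) (le_trans hnN (Nat.le_add_right n k))
        rw [Real.dist_eq] at hρm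
        have habs := abs_lt.1 hρm
        have hDpos : 0 < c / (mR ^ ((1:ℝ)+α) * h mR) := by positivity
        have hDne : c / (mR ^ ((1:ℝ)+α) * h mR) ≠ 0 := hDpos.ne'
        have hfid : f (n+k) = (f (n+k) / (c / (mR ^ ((1:ℝ)+α) * h mR))) *
            (c / (mR ^ ((1:ℝ)+α) * h mR)) := by field_simp
        have hfup : f (n+k) ≤ (1+δ) * (c / (mR ^ ((1:ℝ)+α) * h mR)) := by
          rw [hfid]
          apply mul_le_mul_of_nonneg_right _ hDpos.le
          linarith [habs.2]
        have hflo : (1-δ) * (c / (mR ^ ((1:ℝ)+α) * h mR)) ≤ f (n+k) := by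
          rw [hfid]
          apply mul_le_mul_of_nonneg_right _ hDpos.le
          linarith [habs.1]
        -- rpow bookkeeping
        have hrne : ∀ (x : ℝ), 0 < x → ∀ p : ℝ, x ^ p ≠ 0 :=
          fun x hx p => (Real.rpow_pos_of_pos hx p).ne'
        constructor
        · -- upper bound
          have hden : mR ^ ((1:ℝ)+α) * ((1-δ) * (mR/(n:ℝ)) ^ (-(2*δ)) * h (n:ℝ)) ≤
              mR ^ ((1:ℝ)+α) * h mR :=
            mul_le_mul_of_nonneg_left hpotL (Real.rpow_pos_of_pos hmpos _).le
          have hdenpos : 0 < mR ^ ((1:ℝ)+α) * ((1-δ) * (mR/(n:ℝ)) ^ (-(2*δ)) * h (n:ℝ)) := by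
            have h1 : (0:ℝ) < 1 - δ := by linarith
            have h2 : (0:ℝ) < (mR/(n:ℝ)) ^ (-(2*δ)) := Real.rpow_pos_of_pos htpos _
            positivity
          have hD_up : c / (mR ^ ((1:ℝ)+α) * h mR) ≤
              c / (mR ^ ((1:ℝ)+α) * ((1-δ) * (mR/(n:ℝ)) ^ (-(2*δ)) * h (n:ℝ))) :=
            div_le_div_of_nonneg_left hc.le hdenpos hden
          have heq : c / (mR ^ ((1:ℝ)+α) * ((1-δ) * (mR/(n:ℝ)) ^ (-(2*δ)) * h (n:ℝ))) =
              (c/((1-δ) * h (n:ℝ)) * (n:ℝ) ^ (-(2*δ))) * mR ^ (-(1+(α-2*δ))) := by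
            rw [Real.div_rpow hmpos.le hnRpos.le]
            rw [Real.rpow_neg hmpos.le (2*δ), Real.rpow_neg hnRpos.le (2*δ),
              Real.rpow_neg hmpos.le (1+(α-2*δ))]
            have e2 : mR ^ ((1:ℝ)+α) = mR ^ (2*δ) * mR ^ ((1:ℝ)+(α-2*δ)) := by
              rw [← Real.rpow_add hmpos]; ring_nf
            rw [e2]
            have ne1 := hrne mR hmpos (2*δ)
            have ne2 := hrne mR hmpos ((1:ℝ)+(α-2*δ))
            have ne3 := hrne (n:ℝ) hnRpos (2*δ)
            have ne4 : (1:ℝ) - δ ≠ 0 := by linarith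
            field_simp
          calc f (n+k) ≤ (1+δ) * (c / (mR ^ ((1:ℝ)+α) * h mR)) := hfup
            _ ≤ (1+δ) * (c / (mR ^ ((1:ℝ)+α) * ((1-δ) * (mR/(n:ℝ)) ^ (-(2*δ)) * h (n:ℝ)))) := by
                apply mul_le_mul_of_nonneg_left hD_up (by linarith)
            _ = Ku * mR ^ (-(1+(α-2*δ))) := by rw [heq, hKudef]; ring
        · -- lower bound
          have hden : mR ^ ((1:ℝ)+α) * h mR ≤
              mR ^ ((1:ℝ)+α) * ((1+δ) * (mR/(n:ℝ)) ^ δ * h (n:ℝ)) :=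
            mul_le_mul_of_nonneg_left hpotU (Real.rpow_pos_of_pos hmpos _).le
          have hdenpos : 0 < mR ^ ((1:ℝ)+α) * h mR := by positivity
          have hD_lo : c / (mR ^ ((1:ℝ)+α) * ((1+δ) * (mR/(n:ℝ)) ^ δ * h (n:ℝ))) ≤
              c / (mR ^ ((1:ℝ)+α) * h mR) :=
            div_le_div_of_nonneg_left hc.le hdenpos hden
          have heq : c / (mR ^ ((1:ℝ)+α) * ((1+δ) * (mR/(n:ℝ)) ^ δ * h (n:ℝ))) =
              (c/((1+δ) * h (n:ℝ)) * (n:ℝ) ^ δ) * mR ^ (-(1+(α+δ))) := by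
            rw [Real.div_rpow hmpos.le hnRpos.le]
            rw [Real.rpow_neg hmpos.le (1+(α+δ))]
            have e2 : mR ^ ((1:ℝ)+(α+δ)) = mR ^ ((1:ℝ)+α) * mR ^ δ := by
              rw [← Real.rpow_add hmpos]; ring_nf
            rw [e2]
            have ne1 := hrne mR hmpos δ
            have ne2 := hrne mR hmpos ((1:ℝ)+α)
            have ne3 := hrne (n:ℝ) hnRpos δ
            have ne4 : (1:ℝ) + δ ≠ 0 := by linarith
            field_simp
          calc Kl * mR ^ (-(1+(α+δ)))
              = (1-δ) * (c / (mR ^ ((1:ℝ)+α) * ((1+δ) * (mR/(n:ℝ)) ^ δ * h (n:ℝ)))) := by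
                rw [heq, hKldef]; ring
            _ ≤ (1-δ) * (c / (mR ^ ((1:ℝ)+α) * h mR)) := by
                apply mul_le_mul_of_nonneg_left hD_lo (by linarith)
            _ ≤ f (n+k) := hflo
      -- sum the bounds
      have hsum1 : Summable (fun k : ℕ => Ku * ((n + k : ℕ):ℝ) ^ (-(1+(α-2*δ)))) :=
        (summable_shift hβ₁ n).mul_left Ku
      have hsumf : Summable (fun k : ℕ => f (n+k)) :=
        Summable.of_nonneg_of_le (fun k => hfnonneg _) (fun k => (hterm k).1) hsum1
      have hsum2 : Summable (fun k : ℕ => Kl * ((n + k : ℕ):ℝ) ^ (-(1+(α+δ)))) :=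
        (summable_shift hβ₂ n).mul_left Kl
      have hS_up : (∑' k : ℕ, f (n+k)) ≤ Ku * ∑' k : ℕ, ((n + k : ℕ):ℝ) ^ (-(1+(α-2*δ))) := by
        rw [← tsum_mul_left]
        exact Summable.tsum_le_tsum (fun k => (hterm k).1) hsumf hsum1
      have hS_lo : Kl * (∑' k : ℕ, ((n + k : ℕ):ℝ) ^ (-(1+(α+δ)))) ≤ ∑' k : ℕ, f (n+k) := by
        rw [← tsum_mul_left]
        exact Summable.tsum_le_tsum (fun k => (hterm k).2) hsum2 hsumf
      have hne4 : (1:ℝ) - δ ≠ 0 := by linarith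
      have hne5 : (1:ℝ) + δ ≠ 0 := by linarith
      have hneh : h (n:ℝ) ≠ 0 := hhn.ne'
      constructor
      · calc (∑' k : ℕ, f (n + k)) * ((n:ℝ) ^ α * h (n:ℝ)) / (θ * c)
            ≤ (Ku * ∑' k : ℕ, ((n + k : ℕ):ℝ) ^ (-(1+(α-2*δ)))) * ((n:ℝ) ^ α * h (n:ℝ)) / (θ * c) :=
              div_le_div_of_nonneg_right
                (mul_le_mul_of_nonneg_right hS_up (by positivity)) (by positivity)
          _ = (1+δ)/((1-δ)*θ) * ((n:ℝ) ^ (α-2*δ) * ∑' k : ℕ, ((n + k : ℕ):ℝ) ^ (-(1+(α-2*δ)))) := by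
              have e : (n:ℝ) ^ (α-2*δ) = (n:ℝ) ^ (-(2*δ)) * (n:ℝ) ^ α := by
                rw [← Real.rpow_add hnRpos]; ring_nf
              rw [hKudef, e]
              field_simp
      · calc (1-δ)/((1+δ)*θ) * ((n:ℝ) ^ (α+δ) * ∑' k : ℕ, ((n + k : ℕ):ℝ) ^ (-(1+(α+δ))))
            = (Kl * ∑' k : ℕ, ((n + k : ℕ):ℝ) ^ (-(1+(α+δ)))) * ((n:ℝ) ^ α * h (n:ℝ)) / (θ * c) := by
              have e : (n:ℝ) ^ (α+δ) = (n:ℝ) ^ δ * (n:ℝ) ^ α := by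
                rw [← Real.rpow_add hnRpos]; ring_nf
              rw [hKldef, e]
              field_simp
          _ ≤ (∑' k : ℕ, f (n + k)) * ((n:ℝ) ^ α * h (n:ℝ)) / (θ * c) :=
              div_le_div_of_nonneg_right
                (mul_le_mul_of_nonneg_right hS_lo (by positivity)) (by positivity)
    -- conclude via the tail sum limits
    have hBu := (tailsum hβ₁).const_mul ((1+δ)/((1-δ)*θ))
    have hBl := (tailsum hβ₂).const_mul ((1-δ)/((1+δ)*θ))
    have hUδ : (1+δ)/((1-δ)*θ) * (1/(α-2*δ)) < 1 + ε := by
      have := hδU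
      simp only [hUdef] at this
      linarith
    have hLδ : 1 - ε < (1-δ)/((1+δ)*θ) * (1/(α+δ)) := by
      have := hδL
      simp only [hLdef] at this
      linarith
    have hBue := hBu.eventually_lt_const hUδ
    have hBle := hBl.eventually_const_lt hLδ
    have hNX : ∀ᶠ n : ℕ in atTop, X ≤ (n:ℝ) :=
      tendsto_natCast_atTop_atTop.eventually_ge_atTop X
    filter_upwards [hBue, hBle, hNX, eventually_ge_atTop N₁] with n h1 h2 h3 h4
    obtain ⟨k1, k2⟩ := key n h4 h3
    rw [Real.dist_eq, abs_lt]
    constructor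
    · linarith [k2, h2]
    · linarith [k1, h1]
  have hpart1 : Tendsto (fun n : ℕ => (∑' k : {k : ℕ // n ≤ k}, f k.1) /
      (θ * c / ((n : ℝ) ^ α * h n))) atTop (nhds 1) := by
    apply hmain.congr
    intro n
    rw [tsum_tail_eq f n, div_div_eq_mul_div]
  refine ⟨hpart1, ?_⟩
  -- second part from the first
  have hρ : Tendsto (fun n : ℕ => f n / (c / ((n : ℝ) ^ (1 + α) * h n))) atTop (nhds 1) := hasymp
  have htarget : Tendsto (fun n : ℕ =>
      ((∑' k : {k : ℕ // n ≤ k}, f k.1) / (θ * c / ((n : ℝ) ^ α * h n))) * θ /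
      (f n / (c / ((n : ℝ) ^ (1 + α) * h n)))) atTop (nhds θ) := by
    have := (hpart1.mul_const θ).div hρ one_ne_zero
    rw [one_mul, div_one] at this
    exact this
  apply htarget.congr'
  have hhn : ∀ᶠ n : ℕ in atTop, 0 < h n := tendsto_natCast_atTop_atTop.eventually hslow.1
  have hρbig : ∀ᶠ n : ℕ in atTop, (1:ℝ)/2 ≤ f n / (c / ((n : ℝ) ^ (1 + α) * h n)) := by
    have := Metric.tendsto_nhds.1 hρ (1/2) (by norm_num)
    filter_upwards [this] with n hn
    rw [Real.dist_eq] at hn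
    have := abs_lt.1 hn
    linarith [this.1]
  filter_upwards [hhn, hρbig, eventually_ge_atTop 1] with n hh hρb hn1
  have hnR : (0:ℝ) < (n:ℝ) := by exact_mod_cast hn1
  have hρne : f n / (c / ((n : ℝ) ^ (1 + α) * h n)) ≠ 0 := by linarith
  have hfne : f n ≠ 0 := by
    intro h0
    rw [h0] at hρne
    simp at hρne
  have hpow1 : (n:ℝ) ^ ((1:ℝ) + α) = (n:ℝ) * (n:ℝ) ^ α := by
    rw [Real.rpow_add hnR, Real.rpow_one]
  have hpα : (0:ℝ) < (n:ℝ) ^ α := Real.rpow_pos_of_pos hnR α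
  rw [hpow1]
  field_simp
end

section
/- Fix θ ∈ (1,2], let p_1 be the bounded continuous density of the stable law with Laplace transform exp(λ^θ), with bounded derivative, and set q_s(x) = x s^{−1−1/θ} p_1(−x s^{−1/θ}). Let (B_n) satisfy B_n = h(n)n^{1/θ} with h slowly varying. Then for every α > 0, sup_{1 ≤ j ≤ αB_n} | ∑_{k=n}^∞ (j/(k B_k)) p_1(−j/B_k) − ∫_1^∞ q_s(j/B_n) ds | → 0 as n → ∞. -/
open Filter MeasureTheory

open scoped NNReal

namespace Stmt19Aux

lemma rpow_add_le_add_rpow' {c : ℝ} (hc0 : 0 ≤ c) (hc1 : c ≤ 1) {x y : ℝ}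
    (hx : 0 ≤ x) (hy : 0 ≤ y) : (x + y) ^ c ≤ x ^ c + y ^ c := by
  have h := NNReal.rpow_add_le_add_rpow (x.toNNReal) (y.toNNReal) hc0 hc1
  have h' : (((x.toNNReal + y.toNNReal) ^ c : ℝ≥0) : ℝ)
      ≤ ((x.toNNReal ^ c + y.toNNReal ^ c : ℝ≥0) : ℝ) := by exact_mod_cast h
  rw [NNReal.coe_rpow] at h'
  push_cast [NNReal.coe_rpow, Real.coe_toNNReal _ hx, Real.coe_toNNReal _ hy] at h'
  exact h'

lemma rpow_sub_le {c u v : ℝ} (hc0 : 0 ≤ c) (hc1 : c ≤ 1) (hv : 0 ≤ v) (huv : v ≤ u) :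
    u ^ c - v ^ c ≤ (u - v) ^ c := by
  have h : u ^ c ≤ v ^ c + (u - v) ^ c := by
    have := rpow_add_le_add_rpow' hc0 hc1 hv (by linarith : (0:ℝ) ≤ u - v)
    simpa [add_sub_cancel] using this
  linarith

lemma rpow_step {γ : ℝ} (hγ0 : 0 < γ) (hγ1 : γ ≤ 1) {a : ℝ} (ha : 2 ≤ a) :
    γ * a ^ (-1 - γ) ≤ (a - 1) ^ (-γ) - a ^ (-γ) := by
  have ha0 : (0:ℝ) < a := by linarith
  have hu0 : 0 < 1 / a := by positivity
  have hu1 : 1 / a ≤ 1 / 2 := by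
    rw [div_le_div_iff₀ ha0 two_pos]; linarith
  have hx : (0:ℝ) < 1 - 1 / a := by linarith
  have hb : (1 - 1 / a) ^ γ ≤ 1 - γ * (1 / a) := by
    have := rpow_one_add_le_one_add_mul_self (s := -(1 / a)) (by linarith) hγ0.le hγ1
    have e : 1 + -(1/a) = 1 - 1/a := by ring
    rw [e] at this
    linarith [this]
  have hxp : (0:ℝ) < (1 - 1 / a) ^ γ := Real.rpow_pos_of_pos hx γ
  have hgu : 0 ≤ γ * (1/a) := by positivity
  have hgu2 : γ * (1/a) ≤ 1/2 := by
    calc γ * (1/a) ≤ 1 * (1/2) := mul_le_mul hγ1 hu1 hu0.le zero_le_one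
      _ = 1/2 := by norm_num
  have hkey : 1 + γ * (1 / a) ≤ (1 - 1 / a) ^ (-γ) := by
    rw [Real.rpow_neg hx.le, inv_eq_one_div]
    rw [le_div_iff₀ hxp]
    calc (1 + γ * (1/a)) * (1 - 1/a) ^ γ ≤ (1 + γ * (1/a)) * (1 - γ * (1/a)) := by
          apply mul_le_mul_of_nonneg_left hb (by linarith)
      _ = 1 - (γ * (1/a))^2 := by ring
      _ ≤ 1 := by nlinarith
  -- assemble
  have e1 : (a - 1) ^ (-γ) = a ^ (-γ) * (1 - 1/a) ^ (-γ) := by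
    rw [← Real.mul_rpow ha0.le hx.le]
    congr 1
    field_simp
  have e2 : a ^ (-1 - γ) = a ^ (-γ) * (1/a) := by
    rw [show (-1 - γ) = -γ + (-1) by ring, Real.rpow_add ha0, Real.rpow_neg_one]
    rw [one_div]
  have hap : (0:ℝ) < a ^ (-γ) := Real.rpow_pos_of_pos ha0 _
  rw [e1, e2]
  calc γ * (a ^ (-γ) * (1/a)) = a ^ (-γ) * (γ * (1/a)) := by ring
    _ ≤ a ^ (-γ) * ((1 - 1/a) ^ (-γ) - 1) := by
        apply mul_le_mul_of_nonneg_left _ hap.le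
        linarith
    _ = a ^ (-γ) * (1 - 1/a) ^ (-γ) - a ^ (-γ) := by ring


lemma summable_shift_rpow {γ : ℝ} (hγ0 : 0 < γ) (m : ℕ) :
    Summable (fun i : ℕ => ((m + i : ℕ) : ℝ) ^ (-1 - γ)) := by
  have hs : Summable (fun k : ℕ => (k : ℝ) ^ (-1 - γ)) :=
    Real.summable_nat_rpow.mpr (by linarith)
  have := (summable_nat_add_iff (f := fun k : ℕ => (k : ℝ) ^ (-1 - γ)) m).mpr hs
  refine this.congr fun i => ?_
  simp [add_comm]

lemma tsum_shift_rpow_le {γ : ℝ} (hγ0 : 0 < γ) (hγ1 : γ ≤ 1) {m : ℕ} (hm : 2 ≤ m) :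
    ∑' i : ℕ, ((m + i : ℕ) : ℝ) ^ (-1 - γ) ≤ (2 / γ) * (m : ℝ) ^ (-γ) := by
  have hm1 : (1:ℝ) ≤ (m:ℝ) - 1 := by
    have : (2:ℝ) ≤ (m:ℝ) := by exact_mod_cast hm
    linarith
  have hmr : (2:ℝ) ≤ (m:ℝ) := by exact_mod_cast hm
  have key : ∀ I : ℕ, ∑ i ∈ Finset.range I, ((m + i : ℕ) : ℝ) ^ (-1 - γ)
      ≤ (1/γ) * (((m:ℝ) - 1) ^ (-γ) - ((m:ℝ) + I - 1) ^ (-γ)) := by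
    intro I
    induction I with
    | zero => simp
    | succ I ih =>
      rw [Finset.sum_range_succ]
      have ha : (2:ℝ) ≤ (m:ℝ) + I := by
        have : (0:ℝ) ≤ (I:ℝ) := by positivity
        linarith
      have hstep := rpow_step hγ0 hγ1 ha
      have hterm : ((m + I : ℕ) : ℝ) ^ (-1 - γ)
          ≤ (1/γ) * (((m:ℝ) + I - 1) ^ (-γ) - ((m:ℝ) + I) ^ (-γ)) := by
        have e : ((m + I : ℕ) : ℝ) = (m:ℝ) + I := by push_cast; ring
        rw [e]
        have h2 := mul_le_mul_of_nonneg_left hstep (by positivity : (0:ℝ) ≤ 1/γ)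
        calc ((m:ℝ)+I) ^ (-1-γ) = (1/γ) * (γ * ((m:ℝ)+I) ^ (-1-γ)) := by field_simp
          _ ≤ (1/γ) * (((m:ℝ) + I - 1) ^ (-γ) - ((m:ℝ) + I) ^ (-γ)) := h2
      calc ∑ i ∈ Finset.range I, ((m + i : ℕ) : ℝ) ^ (-1 - γ) + ((m + I : ℕ) : ℝ) ^ (-1 - γ)
          ≤ (1/γ) * (((m:ℝ) - 1) ^ (-γ) - ((m:ℝ) + I - 1) ^ (-γ))
            + (1/γ) * (((m:ℝ) + I - 1) ^ (-γ) - ((m:ℝ) + I) ^ (-γ)) := add_le_add ih hterm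
        _ = (1/γ) * (((m:ℝ) - 1) ^ (-γ) - ((m:ℝ) + ((I+1:ℕ):ℝ) - 1) ^ (-γ)) := by push_cast; ring
  have hbound : ∀ I : ℕ, ∑ i ∈ Finset.range I, ((m + i : ℕ) : ℝ) ^ (-1 - γ)
      ≤ (2 / γ) * (m : ℝ) ^ (-γ) := by
    intro I
    refine (key I).trans ?_
    have h1 : (0:ℝ) ≤ ((m:ℝ) + I - 1) ^ (-γ) := by
      apply Real.rpow_nonneg
      have : (0:ℝ) ≤ (I:ℝ) := by positivity
      linarith
    have h2 : ((m:ℝ) - 1) ^ (-γ) ≤ 2 * (m:ℝ) ^ (-γ) := by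
      have hhalf : (m:ℝ)/2 ≤ (m:ℝ) - 1 := by linarith
      have hb : ((m:ℝ) - 1) ^ (-γ) ≤ ((m:ℝ)/2) ^ (-γ) :=
        Real.rpow_le_rpow_of_nonpos (by linarith) hhalf (by linarith)
      have he : ((m:ℝ)/2) ^ (-γ) = (m:ℝ) ^ (-γ) * 2 ^ γ := by
        rw [Real.div_rpow (by linarith) (by norm_num), Real.rpow_neg (by norm_num : (0:ℝ) ≤ 2)]
        field_simp
      have h2γ : (2:ℝ) ^ γ ≤ 2 := by
        calc (2:ℝ) ^ γ ≤ 2 ^ (1:ℝ) :=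
              Real.rpow_le_rpow_of_exponent_le (by norm_num) hγ1
          _ = 2 := Real.rpow_one 2
      have hmn : (0:ℝ) ≤ (m:ℝ) ^ (-γ) := Real.rpow_nonneg (by positivity) _
      calc ((m:ℝ) - 1) ^ (-γ) ≤ (m:ℝ) ^ (-γ) * 2 ^ γ := by rw [← he]; exact hb
        _ ≤ (m:ℝ) ^ (-γ) * 2 := mul_le_mul_of_nonneg_left h2γ hmn
        _ = 2 * (m:ℝ) ^ (-γ) := by ring
    have hγ' : (0:ℝ) < 1/γ := by positivity
    calc (1/γ) * (((m:ℝ) - 1) ^ (-γ) - ((m:ℝ) + I - 1) ^ (-γ))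
        ≤ (1/γ) * (2 * (m:ℝ) ^ (-γ)) := by
          apply mul_le_mul_of_nonneg_left _ hγ'.le
          linarith
      _ = (2/γ) * (m:ℝ) ^ (-γ) := by ring
  exact (summable_shift_rpow hγ0 m).tsum_le_of_sum_range_le hbound


lemma ratio_limit (θ : ℝ) (hθ1 : 1 < θ) (h : ℝ → ℝ) (hslow : SlowlyVarying h)
    (B : ℕ → ℝ) (hB : ∀ n : ℕ, B n = h n * (n : ℝ) ^ (1 / θ))
    (a b : ℕ) (ha : 0 < a) (hb : 0 < b) :
    Tendsto (fun m : ℕ => B (a * m) / B (b * m)) atTop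
      (nhds (((a : ℝ) / (b : ℝ)) ^ (1 / θ))) := by
  have ha' : (0:ℝ) < a := by exact_mod_cast ha
  have hb' : (0:ℝ) < b := by exact_mod_cast hb
  have hnat : Tendsto (fun m : ℕ => ((b * m : ℕ) : ℝ)) atTop atTop := by
    apply tendsto_natCast_atTop_atTop.comp
    apply tendsto_atTop_mono (fun m => Nat.le_mul_of_pos_left m hb) tendsto_id
  have hh : Tendsto (fun m : ℕ => h ((a * m : ℕ) : ℝ) / h ((b * m : ℕ) : ℝ)) atTop (nhds 1) := by
    have := (hslow.2 ((a:ℝ)/(b:ℝ)) (by positivity)).comp hnat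
    refine this.congr fun m => ?_
    have : (a:ℝ)/(b:ℝ) * ((b * m : ℕ) : ℝ) = ((a * m : ℕ) : ℝ) := by
      push_cast; field_simp
    simp only [Function.comp_apply, this]
  have hmain : Tendsto (fun m : ℕ => h ((a * m : ℕ) : ℝ) / h ((b * m : ℕ) : ℝ)
      * ((a : ℝ) / (b : ℝ)) ^ (1 / θ)) atTop (nhds (((a : ℝ) / (b : ℝ)) ^ (1 / θ))) := by
    have := hh.mul_const (((a : ℝ) / (b : ℝ)) ^ (1 / θ))
    simpa using this
  apply hmain.congr'
  filter_upwards [eventually_ge_atTop 1] with m hm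
  have hm' : (0:ℝ) < m := by exact_mod_cast hm
  have hmc : (0:ℝ) < (m:ℝ) ^ (1/θ) := Real.rpow_pos_of_pos hm' _
  rw [hB, hB]
  have e1 : ((a * m : ℕ) : ℝ) ^ (1/θ) = (a:ℝ) ^ (1/θ) * (m:ℝ) ^ (1/θ) := by
    push_cast
    exact Real.mul_rpow ha'.le hm'.le
  have e2 : ((b * m : ℕ) : ℝ) ^ (1/θ) = (b:ℝ) ^ (1/θ) * (m:ℝ) ^ (1/θ) := by
    push_cast
    exact Real.mul_rpow hb'.le hm'.le
  rw [e1, e2, Real.div_rpow ha'.le hb'.le]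
  rw [show h ((a*m:ℕ):ℝ) * ((a:ℝ)^(1/θ) * (m:ℝ)^(1/θ))
      = (h ((a*m:ℕ):ℝ) * (m:ℝ)^(1/θ)) * (a:ℝ)^(1/θ) by ring,
     show h ((b*m:ℕ):ℝ) * ((b:ℝ)^(1/θ) * (m:ℝ)^(1/θ))
      = (h ((b*m:ℕ):ℝ) * (m:ℝ)^(1/θ)) * (b:ℝ)^(1/θ) by ring,
     mul_div_mul_comm]
  congr 1
  rw [mul_div_mul_right _ _ hmc.ne']

lemma potter (B : ℕ → ℝ) (hBmono : Monotone B) (hBpos : ∀ n : ℕ, 1 ≤ n → 0 < B n)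
    (γ : ℝ) (hγ : 0 < γ)
    (hdouble : ∀ᶠ m : ℕ in atTop, (2:ℝ) ^ γ * B m ≤ B (2 * m)) :
    ∃ N : ℕ, 1 ≤ N ∧ ∀ n k : ℕ, N ≤ n → n ≤ k →
      ((k : ℝ) / (n : ℝ)) ^ γ * B n ≤ 2 ^ γ * B k := by
  obtain ⟨N₀, hN₀⟩ := eventually_atTop.mp hdouble
  refine ⟨max N₀ 1, le_max_right _ _, ?_⟩
  have hstep : ∀ n : ℕ, max N₀ 1 ≤ n → ∀ i : ℕ,
      ((2:ℝ) ^ γ) ^ i * B n ≤ B (2 ^ i * n) := by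
    intro n hn i
    induction i with
    | zero => simp
    | succ i ih =>
      have h1 : (2:ℝ) ^ γ * B (2 ^ i * n) ≤ B (2 * (2 ^ i * n)) := by
        apply hN₀
        calc N₀ ≤ max N₀ 1 := le_max_left _ _
          _ ≤ n := hn
          _ ≤ 2 ^ i * n := Nat.le_mul_of_pos_left n (by positivity)
      have h2γ : (0:ℝ) < 2 ^ γ := Real.rpow_pos_of_pos (by norm_num) _
      calc ((2:ℝ) ^ γ) ^ (i+1) * B n = (2:ℝ) ^ γ * (((2:ℝ) ^ γ) ^ i * B n) := by ring
        _ ≤ (2:ℝ) ^ γ * B (2 ^ i * n) := by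
            apply mul_le_mul_of_nonneg_left ih h2γ.le
        _ ≤ B (2 * (2 ^ i * n)) := h1
        _ = B (2 ^ (i+1) * n) := by ring_nf
  intro n k hn hnk
  have hn1 : 1 ≤ n := le_trans (le_max_right _ _) hn
  have hn0 : 0 < n := hn1
  have hk0 : 0 < k := lt_of_lt_of_le hn0 hnk
  have hn' : (0:ℝ) < n := by exact_mod_cast hn0
  have hk' : (0:ℝ) < k := by exact_mod_cast hk0
  set d := k / n with hd
  have hd1 : 1 ≤ d := (Nat.one_le_div_iff hn0).mpr hnk
  set i := Nat.log 2 d with hi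
  have h2i : 2 ^ i ≤ d := Nat.pow_log_le_self 2 (by omega)
  have h2i' : d < 2 ^ (i + 1) := Nat.lt_pow_succ_log_self (by norm_num) d
  have hkn : 2 ^ i * n ≤ k := by
    rw [← Nat.le_div_iff_mul_le hn0]; exact h2i
  have hkup : (k : ℝ) < (2:ℝ) ^ (i+1) * n := by
    have h1 : k < (d + 1) * n := by
      have e := Nat.div_add_mod k n
      have hm := Nat.mod_lt k hn0
      calc k = n * d + k % n := by rw [hd, e]
        _ < n * d + n := by omega
        _ = (d + 1) * n := by ring
    have h2 : (d:ℝ) + 1 ≤ ((2:ℝ)) ^ (i+1) := by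
      have : d + 1 ≤ 2 ^ (i+1) := h2i'
      exact_mod_cast this
    calc (k:ℝ) < ((d:ℝ) + 1) * n := by exact_mod_cast h1
      _ ≤ (2:ℝ) ^ (i+1) * n := by
          apply mul_le_mul_of_nonneg_right h2 hn'.le
  have hpowγ : ∀ j : ℕ, ((2:ℝ) ^ (j:ℕ)) ^ γ = ((2:ℝ) ^ γ) ^ j := by
    intro j
    rw [← Real.rpow_natCast 2 j, ← Real.rpow_mul (by norm_num), mul_comm,
      Real.rpow_mul (by norm_num), Real.rpow_natCast]
  have hBn : 0 < B n := hBpos n hn1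
  calc ((k:ℝ)/(n:ℝ)) ^ γ * B n ≤ ((2:ℝ) ^ (i+1)) ^ γ * B n := by
        apply mul_le_mul_of_nonneg_right _ hBn.le
        apply Real.rpow_le_rpow (by positivity) _ hγ.le
        rw [div_le_iff₀ hn']
        exact hkup.le
    _ = (2:ℝ) ^ γ * (((2:ℝ) ^ γ) ^ i * B n) := by
        rw [hpowγ (i+1)]; ring
    _ ≤ (2:ℝ) ^ γ * B (2 ^ i * n) := by
        apply mul_le_mul_of_nonneg_left (hstep n hn i)
          (Real.rpow_pos_of_pos (by norm_num) _).le
    _ ≤ (2:ℝ) ^ γ * B k := by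
        apply mul_le_mul_of_nonneg_left (hBmono hkn)
          (Real.rpow_pos_of_pos (by norm_num) _).le


set_option maxHeartbeats 1000000 in
/-- Uniform convergence of `B n / B k` to `(n/k)^(1/θ)` for `n ≤ k < K n`. -/
lemma uniform_ratio (θ : ℝ) (hθ1 : 1 < θ) (hθ2 : θ ≤ 2) (h : ℝ → ℝ) (hslow : SlowlyVarying h)
    (B : ℕ → ℝ) (hB : ∀ n : ℕ, B n = h n * (n : ℝ) ^ (1 / θ))
    (hBpos : ∀ n : ℕ, 1 ≤ n → 0 < B n) (hBmono : Monotone B)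
    (K : ℕ) (hK : 2 ≤ K) (ε : ℝ) (hε : 0 < ε) :
    ∃ N : ℕ, 1 ≤ N ∧ ∀ n k : ℕ, N ≤ n → n ≤ k → k < K * n →
      |B n / B k - ((n : ℝ) / (k : ℝ)) ^ (1 / θ)| ≤ ε := by
  set c := 1 / θ with hc
  have hθ0 : 0 < θ := by linarith
  have hc0 : 0 < c := by positivity
  have hc1 : c ≤ 1 := by
    rw [hc, div_le_one hθ0]; linarith
  have hchalf : 1/2 ≤ c := by
    rw [hc, div_le_div_iff₀ (by norm_num) hθ0]; linarith
  -- choose q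
  obtain ⟨q, hq3, hqε⟩ : ∃ q : ℕ, 3 ≤ q ∧ (3:ℝ)/(q:ℝ) ≤ (ε/2)^2 ∧ (3:ℝ)/(q:ℝ) ≤ 1 := by
    obtain ⟨q₀, hq₀⟩ := exists_nat_gt (3 / (ε/2)^2)
    refine ⟨max q₀ 3, le_max_right _ _, ?_, ?_⟩
    · have hq' : (3:ℝ) / (ε/2)^2 < (max q₀ 3 : ℕ) := by
        calc (3:ℝ) / (ε/2)^2 < q₀ := hq₀
          _ ≤ ((max q₀ 3 : ℕ) : ℝ) := by exact_mod_cast le_max_left _ _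
      have hqpos : (0:ℝ) < ((max q₀ 3 : ℕ) : ℝ) := by
        have : (3:ℕ) ≤ max q₀ 3 := le_max_right _ _
        have : (3:ℝ) ≤ ((max q₀ 3:ℕ):ℝ) := by exact_mod_cast this
        linarith
      rw [div_le_iff₀ hqpos]
      rw [div_lt_iff₀ (by positivity)] at hq'
      linarith
    · have : (3:ℝ) ≤ ((max q₀ 3:ℕ):ℝ) := by exact_mod_cast le_max_right q₀ 3
      rw [div_le_one (by linarith)]; exact this
  obtain ⟨hqε1, hqε2⟩ := hqε
  have hq0 : 0 < q := by omega
  have hq' : (0:ℝ) < q := by exact_mod_cast hq0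
  -- the correction term
  have hcorr : ((3:ℝ)/(q:ℝ)) ^ c ≤ ε/2 := by
    have h1 : ((3:ℝ)/(q:ℝ)) ^ c ≤ ((3:ℝ)/(q:ℝ)) ^ (1/2:ℝ) :=
      Real.rpow_le_rpow_of_exponent_ge (by positivity) hqε2 hchalf
    have h2 : ((3:ℝ)/(q:ℝ)) ^ (1/2:ℝ) = Real.sqrt ((3:ℝ)/(q:ℝ)) :=
      (Real.sqrt_eq_rpow _).symm
    have h3 : Real.sqrt ((3:ℝ)/(q:ℝ)) ≤ Real.sqrt ((ε/2)^2) := Real.sqrt_le_sqrt hqε1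
    have h4 : Real.sqrt ((ε/2)^2) = ε/2 := Real.sqrt_sq (by positivity)
    linarith [h1, h2 ▸ h1]
  -- eventual bounds for each p
  have hev : ∀ᶠ m : ℕ in atTop, ∀ p ∈ Finset.Icc q (q*K),
      B ((q+1)*m) / B (p*m) ≤ (((q:ℝ)+1)/(p:ℝ)) ^ c + ε/2 ∧
      ((q:ℝ)/((p:ℝ)+2)) ^ c - ε/2 ≤ B (q*m) / B ((p+2)*m) := by
    rw [Finset.eventually_all]
    intro p hp
    have hpq : q ≤ p := (Finset.mem_Icc.mp hp).1
    have hp0 : 0 < p := by omega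
    have t1 := ratio_limit θ hθ1 h hslow B hB (q+1) p (by omega) hp0
    have t2 := ratio_limit θ hθ1 h hslow B hB q (p+2) hq0 (by omega)
    have e1 : (((q+1:ℕ):ℝ)/((p:ℕ):ℝ)) = ((q:ℝ)+1)/(p:ℝ) := by push_cast; ring
    have e2 : (((q:ℕ):ℝ)/((p+2:ℕ):ℝ)) = (q:ℝ)/((p:ℝ)+2) := by push_cast; ring
    rw [e1] at t1
    rw [e2] at t2
    have ev1 := t1.eventually_le_const
      (lt_add_of_pos_right _ (by positivity : (0:ℝ) < ε/2))
    have ev2 := t2.eventually_const_le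
      (sub_lt_self _ (by positivity : (0:ℝ) < ε/2))
    filter_upwards [ev1, ev2] with m h1 h2
    exact ⟨h1, h2⟩
  obtain ⟨M₀, hM₀⟩ := eventually_atTop.mp hev
  refine ⟨q * (max M₀ (K*q) + 1), Nat.mul_pos hq0 (Nat.succ_pos _), ?_⟩
  intro n k hn hnk hkK
  -- basic positivity
  have hn0 : 0 < n := by
    have : 0 < q * (max M₀ (K*q) + 1) := by positivity
    omega
  have hk0 : 0 < k := by omega
  have hn' : (0:ℝ) < n := by exact_mod_cast hn0
  have hk' : (0:ℝ) < k := by exact_mod_cast hk0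
  set m := n / q with hm
  have hm_ge : max M₀ (K*q) + 1 ≤ m := by
    rw [hm, Nat.le_div_iff_mul_le hq0]
    calc (max M₀ (K*q) + 1) * q = q * (max M₀ (K*q) + 1) := by ring
      _ ≤ n := hn
  have hmM₀ : M₀ ≤ m := by omega
  have hmKq : K * q ≤ m := by omega
  have hm0 : 0 < m := by omega
  set p := q * k / n with hp
  have hpq : q ≤ p := by
    rw [hp]
    calc q = q * n / n := by rw [Nat.mul_div_assoc q (dvd_refl n), Nat.div_self hn0, mul_one]
      _ ≤ q * k / n := Nat.div_le_div_right (Nat.mul_le_mul_left q hnk)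
  have hpK : p < q * K := by
    rw [hp, Nat.div_lt_iff_lt_mul hn0]
    calc q * k < q * (K * n) := by
          exact mul_lt_mul_of_pos_left hkK hq0
      _ = q * K * n := by ring
  have hpmem : p ∈ Finset.Icc q (q*K) := Finset.mem_Icc.mpr ⟨hpq, hpK.le⟩
  have hp0 : 0 < p := by omega
  have hp' : (0:ℝ) < p := by exact_mod_cast hp0
  -- arithmetic facts
  have hpn_le : p * n ≤ q * k := by
    rw [hp]; exact Nat.div_mul_le_self (q*k) n
  have hqk_lt : q * k < (p+1) * n := by
    have e := Nat.div_add_mod (q*k) n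
    have hmod := Nat.mod_lt (q*k) hn0
    calc q * k = n * p + (q*k) % n := by rw [hp, e]
      _ < n * p + n := by omega
      _ = (p+1) * n := by ring
  have hpm_le_k : p * m ≤ k := by
    calc p * m ≤ p * n / q := Nat.mul_div_le_mul_div_assoc p n q
      _ ≤ q * k / q := Nat.div_le_div_right hpn_le
      _ = k := Nat.mul_div_cancel_left k hq0
  have hq_le_m : q ≤ m := le_trans (Nat.le_mul_of_pos_left q (by omega)) hmKq
  have ediv : q * m + n % q = n := by
    have e := Nat.div_add_mod n q
    rw [← hm] at e
    exact e
  have hmodq : n % q < q := Nat.mod_lt n hq0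
  have hn_lt : n < q * (m + 1) := by
    have expand : q * (m+1) = q * m + q := by ring
    omega
  have hn_le : n ≤ (q+1) * m := by
    have expand : (q+1) * m = q * m + m := by ring
    omega
  have hqm_le_n : q * m ≤ n := by
    rw [hm]
    calc q * (n / q) = n / q * q := by ring
      _ ≤ n := Nat.div_mul_le_self n q
  have hk_le : k ≤ (p+2) * m := by
    have h1 : q * k < q * ((p+1) * (m+1)) := by
      calc q * k < (p+1) * n := hqk_lt
        _ ≤ (p+1) * (q * (m+1)) := Nat.mul_le_mul_left _ hn_lt.le
        _ = q * ((p+1) * (m+1)) := by ring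
    have h2 : k < (p+1) * (m+1) := by
      exact lt_of_mul_lt_mul_left h1 (Nat.zero_le q)
    have hpm : p ≤ m := by
      calc p ≤ q * K := hpK.le
        _ = K * q := by ring
        _ ≤ m := hmKq
    calc k ≤ (p+1) * (m+1) - 1 := by omega
      _ = p * m + p + m := by
          have : (p+1)*(m+1) = p*m + p + m + 1 := by ring
          omega
      _ ≤ p * m + m + m := by omega
      _ = (p+2) * m := by ring
  -- positivity of B values
  have hBk : 0 < B k := hBpos k hk0
  have hBpm : 0 < B (p * m) := hBpos _ (Nat.mul_pos hp0 hm0)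
  have hBp2m : 0 < B ((p+2) * m) := hBpos _ (Nat.mul_pos (by omega) hm0)
  have hBn : 0 < B n := hBpos n hn0
  -- upper bound
  have hub : B n / B k ≤ B ((q+1)*m) / B (p*m) :=
    div_le_div₀ (hBpos _ (Nat.mul_pos (by omega) hm0)).le (hBmono hn_le) hBpm (hBmono hpm_le_k)
  have hlb : B (q*m) / B ((p+2)*m) ≤ B n / B k :=
    div_le_div₀ hBn.le (hBmono hqm_le_n) hBk (hBmono hk_le)
  obtain ⟨hup, hlo⟩ := hM₀ m hmM₀ p hpmem
  -- rpow comparisons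
  have hsub1 : (((q:ℝ)+1)/(p:ℝ)) ^ c ≤ ((q:ℝ)/((p:ℝ)+1)) ^ c + ((3:ℝ)/(q:ℝ)) ^ c := by
    have hv : (0:ℝ) ≤ (q:ℝ)/((p:ℝ)+1) := by positivity
    have hq_le_p : (q:ℝ) ≤ (p:ℝ) := by exact_mod_cast hpq
    have huv : (q:ℝ)/((p:ℝ)+1) ≤ ((q:ℝ)+1)/(p:ℝ) := by
      rw [div_le_div_iff₀ (by positivity) hp']
      nlinarith
    have hdiff : ((q:ℝ)+1)/(p:ℝ) - (q:ℝ)/((p:ℝ)+1) ≤ 3/(q:ℝ) := by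
      rw [div_sub_div _ _ hp'.ne' (by positivity : ((p:ℝ)+1) ≠ 0)]
      rw [div_le_div_iff₀ (by positivity) hq']
      have h3q : (3:ℝ) ≤ (q:ℝ) := by exact_mod_cast hq3
      nlinarith [mul_le_mul_of_nonneg_right hq_le_p hq'.le,
        mul_le_mul_of_nonneg_left hq_le_p hp'.le]
    have h1 : (((q:ℝ)+1)/(p:ℝ)) ^ c - ((q:ℝ)/((p:ℝ)+1)) ^ c
        ≤ (((q:ℝ)+1)/(p:ℝ) - (q:ℝ)/((p:ℝ)+1)) ^ c := rpow_sub_le hc0.le hc1 hv huv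
    have h2 : (((q:ℝ)+1)/(p:ℝ) - (q:ℝ)/((p:ℝ)+1)) ^ c ≤ ((3:ℝ)/(q:ℝ)) ^ c :=
      Real.rpow_le_rpow (by linarith) hdiff hc0.le
    linarith
  have hsub2 : ((q:ℝ)/(p:ℝ)) ^ c ≤ ((q:ℝ)/((p:ℝ)+2)) ^ c + ((3:ℝ)/(q:ℝ)) ^ c := by
    have hv : (0:ℝ) ≤ (q:ℝ)/((p:ℝ)+2) := by positivity
    have hq_le_p : (q:ℝ) ≤ (p:ℝ) := by exact_mod_cast hpq
    have huv : (q:ℝ)/((p:ℝ)+2) ≤ (q:ℝ)/(p:ℝ) := by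
      apply div_le_div_of_nonneg_left (by positivity) hp' (by linarith)
    have hdiff : (q:ℝ)/(p:ℝ) - (q:ℝ)/((p:ℝ)+2) ≤ 3/(q:ℝ) := by
      rw [div_sub_div _ _ hp'.ne' (by positivity : ((p:ℝ)+2) ≠ 0)]
      rw [div_le_div_iff₀ (by positivity) hq']
      have h3q : (3:ℝ) ≤ (q:ℝ) := by exact_mod_cast hq3
      nlinarith [mul_le_mul_of_nonneg_right hq_le_p hq'.le,
        mul_le_mul_of_nonneg_left hq_le_p hp'.le]
    have h1 := rpow_sub_le hc0.le hc1 hv huv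
    have h2 : ((q:ℝ)/(p:ℝ) - (q:ℝ)/((p:ℝ)+2)) ^ c ≤ ((3:ℝ)/(q:ℝ)) ^ c :=
      Real.rpow_le_rpow (by linarith) hdiff hc0.le
    linarith
  -- base comparisons with n/k
  have hbase1 : ((q:ℝ)/((p:ℝ)+1)) ^ c ≤ ((n:ℝ)/(k:ℝ)) ^ c := by
    apply Real.rpow_le_rpow (by positivity) _ hc0.le
    rw [div_le_div_iff₀ (by positivity) hk']
    have : (q:ℝ) * (k:ℝ) < ((p:ℝ)+1) * (n:ℝ) := by exact_mod_cast hqk_lt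
    linarith
  have hbase2 : ((n:ℝ)/(k:ℝ)) ^ c ≤ ((q:ℝ)/(p:ℝ)) ^ c := by
    apply Real.rpow_le_rpow (by positivity) _ hc0.le
    rw [div_le_div_iff₀ hk' hp']
    have : (p:ℝ) * (n:ℝ) ≤ (q:ℝ) * (k:ℝ) := by exact_mod_cast hpn_le
    linarith
  rw [abs_le]
  constructor
  · -- lower: -(ε) ≤ B n/B k - (n/k)^c
    have : ((n:ℝ)/(k:ℝ)) ^ c ≤ B n / B k + ε := by
      calc ((n:ℝ)/(k:ℝ)) ^ c ≤ ((q:ℝ)/(p:ℝ)) ^ c := hbase2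
        _ ≤ ((q:ℝ)/((p:ℝ)+2)) ^ c + ((3:ℝ)/(q:ℝ)) ^ c := hsub2
        _ ≤ ((q:ℝ)/((p:ℝ)+2)) ^ c + ε/2 := by linarith
        _ ≤ (B (q*m) / B ((p+2)*m) + ε/2) + ε/2 := by linarith
        _ ≤ B n / B k + ε := by linarith
    linarith
  · have : B n / B k ≤ ((n:ℝ)/(k:ℝ)) ^ c + ε := by
      calc B n / B k ≤ B ((q+1)*m) / B (p*m) := hub
        _ ≤ (((q:ℝ)+1)/(p:ℝ)) ^ c + ε/2 := hup
        _ ≤ ((q:ℝ)/((p:ℝ)+1)) ^ c + ((3:ℝ)/(q:ℝ)) ^ c + ε/2 := by linarith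
        _ ≤ ((n:ℝ)/(k:ℝ)) ^ c + ε/2 + ε/2 := by linarith
        _ = ((n:ℝ)/(k:ℝ)) ^ c + ε := by ring
    linarith


end Stmt19Aux

open Stmt19Aux

set_option maxHeartbeats 2000000 in
/-- Uniform comparison of the series with the integral: for θ ∈ (1,2], p_1 a
bounded continuous nonnegative density with bounded derivative,
q_s(x) = x s^{−1−1/θ} p_1(−x s^{−1/θ}), and B_n = h(n)n^{1/θ} with h slowly
varying, for every α > 0,
sup_{1 ≤ j ≤ αB_n} |∑_{k=n}^∞ (j/(k B_k)) p_1(−j/B_k) − ∫_1^∞ q_s(j/B_n) ds| → 0. -/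
theorem stmt19 (θ : ℝ) (hθ1 : 1 < θ) (hθ2 : θ ≤ 2)
    (p1 : ℝ → ℝ) (hcont : Continuous p1) (hnonneg : ∀ x, 0 ≤ p1 x)
    (M : ℝ) (hbdd : ∀ x, p1 x ≤ M)
    (hdiff : Differentiable ℝ p1) (M' : ℝ) (hderiv : ∀ x, |deriv p1 x| ≤ M')
    (h : ℝ → ℝ) (hhmeas : Measurable h) (hslow : SlowlyVarying h)
    (B : ℕ → ℝ) (hB : ∀ n : ℕ, B n = h n * (n : ℝ) ^ (1 / θ))
    (hBpos : ∀ n : ℕ, 1 ≤ n → 0 < B n) (hBmono : Monotone B)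
    (q : ℝ → ℝ → ℝ)
    (hq : ∀ s x : ℝ, q s x = x * s ^ (-(1 : ℝ) - 1 / θ) * p1 (-x * s ^ (-(1 / θ))))
    (α : ℝ) (hα : 0 < α) :
    ∀ η : ℝ, 0 < η → ∃ N : ℕ, ∀ n : ℕ, N ≤ n → ∀ j : ℕ, 1 ≤ j →
      (j : ℝ) ≤ α * B n →
      |(∑' k : {k : ℕ // n ≤ k}, ((j : ℝ) / ((k.1 : ℝ) * B k.1)) * p1 (-(j : ℝ) / B k.1))
          - ∫ s in Set.Ioi (1 : ℝ), q s ((j : ℝ) / B n)| < η := by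
  intro η hη
  have hθ0 : (0:ℝ) < θ := by linarith
  set c : ℝ := 1 / θ with hcdef
  have hc0 : 0 < c := by positivity
  have hc1 : c ≤ 1 := by rw [hcdef, div_le_one hθ0]; linarith
  have hchalf : 1/2 ≤ c := by rw [hcdef, div_le_div_iff₀ (by norm_num) hθ0]; linarith
  set γ : ℝ := c / 2 with hγdef
  have hγ0 : 0 < γ := by positivity
  have hγ1 : γ ≤ 1 := by rw [hγdef]; linarith
  have hγc : γ < c := by rw [hγdef]; linarith
  have hM : 0 ≤ M := le_trans (hnonneg 0) (hbdd 0)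
  have hM' : 0 ≤ M' := le_trans (abs_nonneg _) (hderiv 0)
  -- Lipschitz bound on p1
  have hlip : ∀ u v : ℝ, |p1 u - p1 v| ≤ M' * |u - v| := by
    intro u v
    have := Convex.norm_image_sub_le_of_norm_deriv_le (f := p1) (C := M')
      (fun z _ => hdiff z) (fun z _ => by
        rw [Real.norm_eq_abs]; exact hderiv z) convex_univ (Set.mem_univ v) (Set.mem_univ u)
    simpa [Real.norm_eq_abs] using this
  -- doubling property
  have hdouble : ∀ᶠ m : ℕ in atTop, (2:ℝ) ^ γ * B m ≤ B (2 * m) := by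
    have t := ratio_limit θ hθ1 h hslow B hB 2 1 (by norm_num) (by norm_num)
    simp only [one_mul, Nat.cast_ofNat, Nat.cast_one, div_one] at t
    have h2γc : (2:ℝ) ^ γ < (2:ℝ) ^ c :=
      Real.rpow_lt_rpow_of_exponent_lt (by norm_num) hγc
    have ev1 := t.eventually_const_le h2γc
    filter_upwards [ev1, eventually_ge_atTop 1] with m h1 h2
    have hBm : 0 < B m := hBpos m h2
    rw [le_div_iff₀ hBm] at h1
    exact h1
  obtain ⟨N₂, hN₂1, hPot⟩ := potter B hBmono hBpos γ hγ0 hdouble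
  -- constants
  set C₁ : ℝ := α * M + α * α * M' + 1 with hC₁def
  have hC₁ : 0 < C₁ := by positivity
  set C₂ : ℝ := α * M * 2 ^ γ with hC₂def
  have hC₂ : 0 ≤ C₂ := by positivity
  set Cτ : ℝ := C₂ * (2 / γ) + 1 with hCτdef
  have hCτ : 0 < Cτ := by positivity
  set Cι : ℝ := α * M / c + 1 with hCιdef
  have hCι : 0 < Cι := by positivity
  -- choose K
  have hKlim1 : Tendsto (fun K : ℕ => Cτ * (K:ℝ) ^ (-γ)) atTop (nhds 0) := by
    have := ((tendsto_rpow_neg_atTop hγ0).comp tendsto_natCast_atTop_atTop).const_mul Cτ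
    simpa using this
  have hKlim2 : Tendsto (fun K : ℕ => Cι * (K:ℝ) ^ (-c)) atTop (nhds 0) := by
    have := ((tendsto_rpow_neg_atTop hc0).comp tendsto_natCast_atTop_atTop).const_mul Cι
    simpa using this
  have hKev : ∀ᶠ K : ℕ in atTop, Cτ * (K:ℝ) ^ (-γ) < η/4 ∧ Cι * (K:ℝ) ^ (-c) < η/4 ∧ 2 ≤ K := by
    filter_upwards [hKlim1.eventually_lt_const (by linarith : (0:ℝ) < η/4),
      hKlim2.eventually_lt_const (by linarith : (0:ℝ) < η/4),
      eventually_ge_atTop 2] with K h1 h2 h3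
    exact ⟨h1, h2, h3⟩
  obtain ⟨K, hKτ, hKι, hK2⟩ := hKev.exists
  obtain ⟨K', rfl⟩ : ∃ K', K = K' + 2 := ⟨K - 2, by omega⟩
  set K : ℕ := K' + 2 with hKdef
  have hK' : (0:ℝ) < K := by positivity
  have hK1 : (1:ℝ) ≤ (K:ℝ) := by exact_mod_cast (by omega : 1 ≤ K)
  -- choose ε
  set ε : ℝ := η / (8 * (K:ℝ) * C₁) with hεdef
  have hε : 0 < ε := by positivity
  obtain ⟨N₅, hN₅1, hUnif⟩ := uniform_ratio θ hθ1 hθ2 h hslow B hB hBpos hBmono K hK2 ε hε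
  obtain ⟨N₀, hN₀⟩ := exists_nat_gt (16 * (K:ℝ) * C₁ / η)
  refine ⟨max (max N₂ N₅) (max N₀ 1), ?_⟩
  intro n hn j hj hjle
  have hn1 : 1 ≤ n := le_trans (le_trans (le_max_right N₀ 1) (le_max_right _ _)) hn
  have hnN₂ : N₂ ≤ n := le_trans (le_trans (le_max_left _ _) (le_max_left _ _)) hn
  have hnN₅ : N₅ ≤ n := le_trans (le_trans (le_max_right _ _) (le_max_left _ _)) hn
  have hnN₀ : N₀ ≤ n := le_trans (le_trans (le_max_left N₀ 1) (le_max_right _ _)) hn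
  have hn' : (0:ℝ) < n := by exact_mod_cast hn1
  have hBn : 0 < B n := hBpos n hn1
  set x : ℝ := (j:ℝ) / B n with hxdef
  have hx0 : 0 ≤ x := div_nonneg (Nat.cast_nonneg j) hBn.le
  have hxα : x ≤ α := by rw [hxdef, div_le_iff₀ hBn]; exact hjle
  have hjx : x * B n = (j:ℝ) := div_mul_cancel₀ _ hBn.ne'
  set f : ℕ → ℝ := fun k => (j:ℝ) / ((k:ℝ) * B k) * p1 (-(j:ℝ) / B k) with hfdef
  -- per-term bounds
  have hkfacts : ∀ k : ℕ, n ≤ k → 0 ≤ f k ∧ f k ≤ (C₂ * (n:ℝ)^γ) * (k:ℝ)^(-1-γ) := by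
    intro k hk
    have hk1 : 1 ≤ k := le_trans hn1 hk
    have hk' : (0:ℝ) < k := by exact_mod_cast hk1
    have hBk : 0 < B k := hBpos k hk1
    have hfnonneg : 0 ≤ f k :=
      mul_nonneg (div_nonneg (Nat.cast_nonneg j) (by positivity)) (hnonneg _)
    refine ⟨hfnonneg, ?_⟩
    have hratio : B n / B k ≤ 2^γ * ((n:ℝ)/(k:ℝ))^γ := by
      have hp := hPot n k hnN₂ hk
      have hknγ : (0:ℝ) < ((k:ℝ)/(n:ℝ))^γ := Real.rpow_pos_of_pos (by positivity) _
      have e : (((k:ℝ)/(n:ℝ))^γ)⁻¹ = ((n:ℝ)/(k:ℝ))^γ := by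
        rw [← Real.inv_rpow (by positivity), inv_div]
      rw [div_le_iff₀ hBk]
      calc B n = (((k:ℝ)/(n:ℝ))^γ)⁻¹ * (((k:ℝ)/(n:ℝ))^γ * B n) := by
            rw [← mul_assoc, inv_mul_cancel₀ hknγ.ne', one_mul]
        _ ≤ (((k:ℝ)/(n:ℝ))^γ)⁻¹ * (2^γ * B k) := by
            apply mul_le_mul_of_nonneg_left hp (by positivity)
        _ = 2^γ * ((n:ℝ)/(k:ℝ))^γ * B k := by rw [e]; ring
    have hjover : (j:ℝ) / ((k:ℝ) * B k) = x * (B n / B k) * (1/(k:ℝ)) := by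
      rw [← hjx]
      field_simp
    have h1 : (j:ℝ) / ((k:ℝ) * B k) ≤ α * (2^γ * ((n:ℝ)/(k:ℝ))^γ) * (1/(k:ℝ)) := by
      rw [hjover]
      apply mul_le_mul_of_nonneg_right _ (by positivity)
      exact mul_le_mul hxα hratio (div_nonneg hBn.le hBk.le) hα.le
    have e2 : ((n:ℝ)/(k:ℝ))^γ * (1/(k:ℝ)) = (n:ℝ)^γ * (k:ℝ)^(-1-γ) := by
      have hkk : (k:ℝ)^(-1-γ) = (k:ℝ)⁻¹ * ((k:ℝ)^γ)⁻¹ := by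
        rw [show (-1-γ : ℝ) = (-1) + (-γ) by ring, Real.rpow_add hk',
          Real.rpow_neg_one, Real.rpow_neg hk'.le]
      rw [Real.div_rpow (by positivity) hk'.le, hkk]
      rw [div_eq_mul_inv, one_div]
      ring
    calc f k ≤ (j:ℝ) / ((k:ℝ) * B k) * M := by
          apply mul_le_mul_of_nonneg_left (hbdd _)
            (div_nonneg (Nat.cast_nonneg j) (by positivity))
      _ ≤ α * (2^γ * ((n:ℝ)/(k:ℝ))^γ) * (1/(k:ℝ)) * M := by
          apply mul_le_mul_of_nonneg_right h1 hM
      _ = α * 2^γ * M * (((n:ℝ)/(k:ℝ))^γ * (1/(k:ℝ))) := by ring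
      _ = α * 2^γ * M * ((n:ℝ)^γ * (k:ℝ)^(-1-γ)) := by rw [e2]
      _ = (C₂ * (n:ℝ)^γ) * (k:ℝ)^(-1-γ) := by rw [hC₂def]; ring
  -- summability
  have hgsum : Summable (fun i : ℕ => f (n + i)) := by
    apply Summable.of_nonneg_of_le (fun i => (hkfacts (n+i) (Nat.le_add_right n i)).1)
      (fun i => (hkfacts (n+i) (Nat.le_add_right n i)).2)
    exact (summable_shift_rpow hγ0 n).mul_left _
  -- shifting the tsum
  have htsum_eq : (∑' k : {k : ℕ // n ≤ k}, ((j : ℝ) / ((k.1 : ℝ) * B k.1))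
      * p1 (-(j : ℝ) / B k.1)) = ∑' i : ℕ, f (n + i) := by
    rw [← Equiv.tsum_eq
      (⟨fun i => ⟨n + i, Nat.le_add_right n i⟩, fun k => k.1 - n,
        fun i => by simp, fun k => by ext; simp [Nat.add_sub_cancel' k.2]⟩ :
        ℕ ≃ {k : ℕ // n ≤ k})
      (fun k : {k : ℕ // n ≤ k} => ((j : ℝ) / ((k.1 : ℝ) * B k.1)) * p1 (-(j : ℝ) / B k.1))]
    rfl
  set m' : ℕ := (K' + 1) * n with hm'def
  have hsplit_sum : ∑' i : ℕ, f (n + i)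
      = (∑ i ∈ Finset.range m', f (n + i)) + ∑' i : ℕ, f (n + (i + m')) :=
    (hgsum.sum_add_tsum_nat_add m').symm
  have hidx : ∀ i : ℕ, n + (i + m') = K * n + i := by
    intro i
    rw [hm'def, hKdef]
    ring
  have htail_rw : (fun i : ℕ => f (n + (i + m'))) = fun i : ℕ => f (K * n + i) := by
    funext i
    rw [hidx i]
  have hKn_le : ∀ i : ℕ, n ≤ K * n + i := by
    intro i
    calc n ≤ K * n := Nat.le_mul_of_pos_left n (by omega)
      _ ≤ K * n + i := Nat.le_add_right _ _
  have htail_nonneg : 0 ≤ ∑' i : ℕ, f (n + (i + m')) := by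
    rw [htail_rw]
    exact tsum_nonneg (fun i => (hkfacts _ (hKn_le i)).1)
  have htail_summable : Summable (fun i : ℕ => f (K * n + i)) := by
    have h1 : Summable (fun i : ℕ => f (n + (i + m'))) :=
      ((summable_nat_add_iff m').mpr hgsum)
    rwa [htail_rw] at h1
  have hKn2 : 2 ≤ K * n := by
    calc 2 = 2 * 1 := by norm_num
      _ ≤ K * n := Nat.mul_le_mul hK2 hn1
  have htail_le : ∑' i : ℕ, f (n + (i + m')) ≤ Cτ * (K:ℝ)^(-γ) := by
    rw [htail_rw]
    have hstep1 : ∑' i : ℕ, f (K * n + i)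
        ≤ ∑' i : ℕ, (C₂ * (n:ℝ)^γ) * ((K * n + i : ℕ):ℝ)^(-1-γ) := by
      apply Summable.tsum_le_tsum (fun i => (hkfacts _ (hKn_le i)).2) htail_summable
      exact (summable_shift_rpow hγ0 (K*n)).mul_left _
    have hstep2 : ∑' i : ℕ, (C₂ * (n:ℝ)^γ) * ((K * n + i : ℕ):ℝ)^(-1-γ)
        = (C₂ * (n:ℝ)^γ) * ∑' i : ℕ, ((K * n + i : ℕ):ℝ)^(-1-γ) := tsum_mul_left
    have hstep3 : ∑' i : ℕ, ((K * n + i : ℕ):ℝ)^(-1-γ) ≤ (2/γ) * ((K * n : ℕ):ℝ)^(-γ) :=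
      tsum_shift_rpow_le hγ0 hγ1 hKn2
    have hnγpos : (0:ℝ) < (n:ℝ)^γ := Real.rpow_pos_of_pos hn' _
    have hrw : ((K * n : ℕ):ℝ)^(-γ) = (K:ℝ)^(-γ) * (n:ℝ)^(-γ) := by
      push_cast
      exact Real.mul_rpow (by positivity) hn'.le
    have hcancel : (n:ℝ)^γ * (n:ℝ)^(-γ) = 1 := by
      rw [← Real.rpow_add hn']
      norm_num
    calc ∑' i : ℕ, f (K * n + i)
        ≤ (C₂ * (n:ℝ)^γ) * ∑' i : ℕ, ((K * n + i : ℕ):ℝ)^(-1-γ) := by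
          rw [← hstep2]; exact hstep1
      _ ≤ (C₂ * (n:ℝ)^γ) * ((2/γ) * ((K * n : ℕ):ℝ)^(-γ)) := by
          apply mul_le_mul_of_nonneg_left hstep3 (by positivity)
      _ = (C₂ * (2/γ)) * ((K:ℝ)^(-γ)) * ((n:ℝ)^γ * (n:ℝ)^(-γ)) := by
          rw [hrw]; ring
      _ = (C₂ * (2/γ)) * (K:ℝ)^(-γ) := by rw [hcancel, mul_one]
      _ ≤ Cτ * (K:ℝ)^(-γ) := by
          apply mul_le_mul_of_nonneg_right _ (Real.rpow_nonneg hK'.le _)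
          rw [hCτdef]
          linarith
  -- integral side
  have hexp_lt : (-1 : ℝ) - c < -1 := by linarith
  have hbound_ptwise : ∀ s : ℝ, s ∈ Set.Ioi (1:ℝ) →
      ‖q s x‖ ≤ α * M * s ^ (-(1:ℝ) - c) := by
    intro s hs
    have hs1 : (1:ℝ) < s := hs
    have hs0 : (0:ℝ) < s := by linarith
    have hrpos : (0:ℝ) ≤ s ^ (-(1:ℝ) - c) := Real.rpow_nonneg hs0.le _
    rw [hq s x, Real.norm_eq_abs]
    have hnn : 0 ≤ x * s ^ (-(1:ℝ) - c) * p1 (-x * s ^ (-c)) :=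
      mul_nonneg (mul_nonneg hx0 hrpos) (hnonneg _)
    rw [abs_of_nonneg hnn]
    calc x * s ^ (-(1:ℝ) - c) * p1 (-x * s ^ (-c))
        ≤ (α * s ^ (-(1:ℝ) - c)) * M := by
          apply mul_le_mul (mul_le_mul_of_nonneg_right hxα hrpos) (hbdd _) (hnonneg _)
            (by positivity)
      _ = α * M * s ^ (-(1:ℝ) - c) := by ring
  have hmaj : IntegrableOn (fun s : ℝ => α * M * s ^ (-(1:ℝ) - c)) (Set.Ioi (1:ℝ)) := by
    exact (integrableOn_Ioi_rpow_of_lt hexp_lt one_pos).const_mul (α * M)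
  have hQcont : ContinuousOn (fun s : ℝ => q s x) (Set.Ioi (1:ℝ)) := by
    have h1 : ContinuousOn (fun s : ℝ => s ^ (-(1:ℝ) - c)) (Set.Ioi (1:ℝ)) :=
      continuousOn_id.rpow_const (fun s hs => Or.inl (by
        have : (1:ℝ) < s := hs
        positivity))
    have h2 : ContinuousOn (fun s : ℝ => s ^ (-c)) (Set.Ioi (1:ℝ)) :=
      continuousOn_id.rpow_const (fun s hs => Or.inl (by
        have : (1:ℝ) < s := hs
        positivity))
    have h3 : ContinuousOn (fun s : ℝ => p1 (-x * s ^ (-c))) (Set.Ioi (1:ℝ)) :=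
      hcont.comp_continuousOn (continuousOn_const.mul h2)
    have h4 : ContinuousOn (fun s : ℝ => x * s ^ (-(1:ℝ) - c)) (Set.Ioi (1:ℝ)) :=
      continuousOn_const.mul h1
    have := (h4.mul h3)
    refine this.congr fun s hs => ?_
    rw [hq s x]; rfl
  have hQint : IntegrableOn (fun s : ℝ => q s x) (Set.Ioi (1:ℝ)) := by
    apply hmaj.mono' (hQcont.aestronglyMeasurable measurableSet_Ioi)
    rw [ae_restrict_iff' measurableSet_Ioi]
    exact ae_of_all _ hbound_ptwise
  have hsplit_int : ∫ s in Set.Ioi (1:ℝ), q s x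
      = (∫ s in Set.Ioc (1:ℝ) (K:ℝ), q s x) + ∫ s in Set.Ioi (K:ℝ), q s x := by
    rw [← Set.Ioc_union_Ioi_eq_Ioi hK1]
    exact setIntegral_union (Set.Ioc_disjoint_Ioi le_rfl) measurableSet_Ioi
      (hQint.mono_set Set.Ioc_subset_Ioi_self)
      (hQint.mono_set (Set.Ioi_subset_Ioi hK1))
  -- tail of the integral
  have hItail : |∫ s in Set.Ioi (K:ℝ), q s x| ≤ Cι * (K:ℝ)^(-c) := by
    have hms : Set.Ioi (K:ℝ) ⊆ Set.Ioi (1:ℝ) := Set.Ioi_subset_Ioi hK1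
    have h1 : ‖∫ s in Set.Ioi (K:ℝ), q s x‖
        ≤ ∫ s in Set.Ioi (K:ℝ), α * M * s ^ (-(1:ℝ) - c) := by
      apply norm_integral_le_of_norm_le (hmaj.mono_set hms)
      rw [ae_restrict_iff' measurableSet_Ioi]
      exact ae_of_all _ (fun s hs => hbound_ptwise s (hms hs))
    have h2 : ∫ s in Set.Ioi (K:ℝ), α * M * s ^ (-(1:ℝ) - c)
        = α * M * ((K:ℝ) ^ (-c) / c) := by
      rw [MeasureTheory.integral_const_mul]
      rw [integral_Ioi_rpow_of_lt (by linarith : -(1:ℝ) - c < -1) hK']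
      rw [show (-(1:ℝ) - c) + 1 = -c by ring]
      rw [neg_div, div_neg, neg_neg]
    rw [Real.norm_eq_abs] at h1
    calc |∫ s in Set.Ioi (K:ℝ), q s x| ≤ α * M * ((K:ℝ) ^ (-c) / c) := by
          rw [← h2]; exact h1
      _ = (α * M / c) * (K:ℝ) ^ (-c) := by ring
      _ ≤ Cι * (K:ℝ) ^ (-c) := by
          apply mul_le_mul_of_nonneg_right _ (Real.rpow_nonneg hK'.le _)
          rw [hCιdef]; linarith
  -- decompose the main integral into adjacent intervals
  set a : ℕ → ℝ := fun i => ((n + i : ℕ):ℝ) / (n:ℝ) with hadef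
  have ha_mono : ∀ i : ℕ, a i ≤ a (i+1) := by
    intro i
    simp only [hadef]
    gcongr
    omega
  have ha1 : ∀ i : ℕ, 1 ≤ a i := by
    intro i
    simp only [hadef]
    rw [le_div_iff₀ hn', one_mul]
    exact_mod_cast Nat.le_add_right n i
  have ha0 : a 0 = 1 := by
    simp only [hadef]
    simp [div_self hn'.ne']
  have ham : a m' = (K:ℝ) := by
    simp only [hadef, hm'def]
    have e : n + (K' + 1) * n = K * n := by rw [hKdef]; ring
    rw [e]
    push_cast
    rw [mul_div_assoc, div_self hn'.ne', mul_one]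
  have hasub : ∀ i : ℕ, Set.Ioc (a i) (a (i+1)) ⊆ Set.Ioi (1:ℝ) := by
    intro i s hs
    exact lt_of_le_of_lt (ha1 i) hs.1
  have hint : ∀ i : ℕ, IntervalIntegrable (fun s => q s x) volume (a i) (a (i+1)) :=
    fun i => (intervalIntegrable_iff_integrableOn_Ioc_of_le (ha_mono i)).mpr
      (hQint.mono_set (hasub i))
  have hIoc : ∑ i ∈ Finset.range m', (∫ s in (a i)..(a (i+1)), q s x)
      = ∫ s in Set.Ioc (1:ℝ) (K:ℝ), q s x := by
    calc ∑ i ∈ Finset.range m', (∫ s in (a i)..(a (i+1)), q s x)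
        = ∫ s in (a 0)..(a m'), q s x :=
          intervalIntegral.sum_integral_adjacent_intervals (fun i _ => hint i)
      _ = ∫ s in (1:ℝ)..(K:ℝ), q s x := by rw [ha0, ham]
      _ = ∫ s in Set.Ioc (1:ℝ) (K:ℝ), q s x := intervalIntegral.integral_of_le hK1
  -- per-interval estimate
  have hper : ∀ i ∈ Finset.range m',
      |f (n + i) - ∫ s in (a i)..(a (i+1)), q s x| ≤ (C₁ * (ε + 2/(n:ℝ))) * (1/(n:ℝ)) := by
    intro i hi
    have hik : i < m' := Finset.mem_range.mp hi
    set k : ℕ := n + i with hkdef2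
    have hk : n ≤ k := Nat.le_add_right n i
    have hk1 : 1 ≤ k := le_trans hn1 hk
    have hk' : (0:ℝ) < k := by exact_mod_cast hk1
    have hBk : 0 < B k := hBpos k hk1
    have hkK : k < K * n := by
      have eKn : K * n = n + m' := by rw [hKdef, hm'def]; ring
      omega
    have hA : |B n / B k - ((n:ℝ)/(k:ℝ)) ^ c| ≤ ε := hUnif n k hnN₅ hk hkK
    set b : ℝ := B n / B k with hbdef
    have hb0 : 0 ≤ b := div_nonneg hBn.le hBk.le
    have hai : a i = (k:ℝ)/(n:ℝ) := by simp [hadef, hkdef2]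
    have hai1 : a (i+1) = ((k:ℝ)+1)/(n:ℝ) := by
      simp only [hadef, hkdef2]
      push_cast
      ring
    have hkn1 : (1:ℝ) ≤ (k:ℝ)/(n:ℝ) := by
      rw [le_div_iff₀ hn', one_mul]
      exact_mod_cast hk
    have hlen : a (i+1) - a i = 1/(n:ℝ) := by
      rw [hai, hai1, div_sub_div_same]
      norm_num
    set V : ℝ := x * ((n:ℝ)/(k:ℝ)) * b * p1 (-(x*b)) with hVdef
    have harg : -(j:ℝ)/B k = -(x*b) := by
      rw [← hjx, hbdef, neg_div, mul_div_assoc]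
    have hcoef : (j:ℝ)/((k:ℝ)*B k) = (1/(n:ℝ)) * (x * ((n:ℝ)/(k:ℝ)) * b) := by
      rw [← hjx, hbdef]
      field_simp
    have hfkV : f k = (1/(n:ℝ)) * V := by
      calc f k = (j:ℝ)/((k:ℝ)*B k) * p1 (-(j:ℝ)/B k) := rfl
        _ = (1/(n:ℝ)) * V := by rw [hcoef, harg, hVdef]; ring
    -- pointwise bound
    have hptwise : ∀ s ∈ Set.Ioc (a i) (a (i+1)), |V - q s x| ≤ C₁ * (ε + 2/(n:ℝ)) := by
      intro s hs
      obtain ⟨hs1, hs2⟩ := hs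
      rw [hai] at hs1
      rw [hai1] at hs2
      have hsgt1 : 1 < s := lt_of_le_of_lt hkn1 hs1
      have hs0 : (0:ℝ) < s := by linarith only [hsgt1]
      have hsml : s ^ (-(1:ℝ)-c) ≤ 1 :=
        Real.rpow_le_one_of_one_le_of_nonpos (by linarith only [hsgt1])
          (by linarith only [hc0])
      have hsml0 : 0 ≤ s ^ (-(1:ℝ)-c) := Real.rpow_nonneg hs0.le _
      have hnkpos : (0:ℝ) < (n:ℝ)/(k:ℝ) := by positivity
      have hknpos : (0:ℝ) < (k:ℝ)/(n:ℝ) := by positivity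
      have hnk1 : (n:ℝ)/(k:ℝ) ≤ 1 := by
        rw [div_le_one hk']
        exact_mod_cast hk
      have e3 : ((n:ℝ)/(k:ℝ)) * ((n:ℝ)/(k:ℝ))^c = ((k:ℝ)/(n:ℝ))^(-(1:ℝ)-c) := by
        rw [show (-(1:ℝ)-c) = -(1+c) by ring, Real.rpow_neg hknpos.le,
          ← Real.inv_rpow hknpos.le, inv_div, Real.rpow_add hnkpos, Real.rpow_one]
      have e3' : ((n:ℝ)/(k:ℝ))^c = ((k:ℝ)/(n:ℝ))^(-c) := by
        rw [Real.rpow_neg hknpos.le, ← Real.inv_rpow hknpos.le, inv_div]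
      -- sandwich bounds, exponent -(1)-c
      have hmono1 : s ^ (-(1:ℝ)-c) ≤ ((k:ℝ)/(n:ℝ)) ^ (-(1:ℝ)-c) :=
        Real.rpow_le_rpow_of_nonpos hknpos hs1.le (by linarith only [hc0])
      have hmono2 : (((k:ℝ)+1)/(n:ℝ)) ^ (-(1:ℝ)-c) ≤ s ^ (-(1:ℝ)-c) :=
        Real.rpow_le_rpow_of_nonpos hs0 hs2 (by linarith only [hc0])
      have hkn_le : (n:ℝ) ≤ (k:ℝ) := by exact_mod_cast hk
      have hz01 : (0:ℝ) < (k:ℝ)/((k:ℝ)+1) := by positivity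
      have hz1 : (k:ℝ)/((k:ℝ)+1) ≤ 1 := by
        rw [div_le_one (by positivity)]
        linarith only []
      have efac : ((k:ℝ)+1)/(n:ℝ) = ((k:ℝ)/(n:ℝ)) * (((k:ℝ)+1)/(k:ℝ)) := by
        field_simp
        try ring
      have hgap1 : ((k:ℝ)/(n:ℝ)) ^ (-(1:ℝ)-c) - (((k:ℝ)+1)/(n:ℝ)) ^ (-(1:ℝ)-c) ≤ 2/(n:ℝ) := by
        have hfac : (((k:ℝ)+1)/(n:ℝ))^(-(1:ℝ)-c)
            = ((k:ℝ)/(n:ℝ))^(-(1:ℝ)-c) * ((((k:ℝ)+1)/(k:ℝ))^(-(1:ℝ)-c)) := by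
          rw [efac, Real.mul_rpow hknpos.le (by positivity)]
        have ez : (((k:ℝ)+1)/(k:ℝ))^(-(1:ℝ)-c) = ((k:ℝ)/((k:ℝ)+1))^(1+c) := by
          rw [show (-(1:ℝ)-c) = -(1+c) by ring, Real.rpow_neg (by positivity),
            ← Real.inv_rpow (by positivity), inv_div]
        have hZlow : ((k:ℝ)/((k:ℝ)+1))^((2:ℕ):ℝ) ≤ ((k:ℝ)/((k:ℝ)+1))^(1+c) :=
          Real.rpow_le_rpow_of_exponent_ge hz01 hz1 (by push_cast; linarith only [hc1])
        have hZ2 : ((k:ℝ)/((k:ℝ)+1))^((2:ℕ):ℝ) = ((k:ℝ)/((k:ℝ)+1))^(2:ℕ) :=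
          Real.rpow_natCast _ 2
        have hfrac : 1 - ((k:ℝ)/((k:ℝ)+1))^(2:ℕ) ≤ 2/(n:ℝ) := by
          have e5 : 1 - ((k:ℝ)/((k:ℝ)+1))^(2:ℕ) = (2*(k:ℝ)+1)/(((k:ℝ)+1)^(2:ℕ)) := by
            field_simp
            ring
          rw [e5, div_le_div_iff₀ (by positivity) hn']
          have e8 : (2*(k:ℝ)+1) * (n:ℝ) ≤ (2*(k:ℝ)+1) * (k:ℝ) :=
            mul_le_mul_of_nonneg_left hkn_le (by positivity)
          have e9 : (2*(k:ℝ)+1) * (k:ℝ) = 2*(k:ℝ)^(2:ℕ) + (k:ℝ) := by ring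
          have e10 : 2*((k:ℝ)+1)^(2:ℕ) = 2*(k:ℝ)^(2:ℕ) + 4*(k:ℝ) + 2 := by ring
          linarith only [e8, e9, e10, hk'.le]
        have hZle1 : ((k:ℝ)/((k:ℝ)+1))^(1+c) ≤ 1 :=
          Real.rpow_le_one hz01.le hz1 (by linarith only [hc0])
        have hU1 : ((k:ℝ)/(n:ℝ))^(-(1:ℝ)-c) ≤ 1 :=
          Real.rpow_le_one_of_one_le_of_nonpos hkn1 (by linarith only [hc0])
        have hU0 : 0 ≤ ((k:ℝ)/(n:ℝ))^(-(1:ℝ)-c) := Real.rpow_nonneg hknpos.le _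
        have hZZ : ((k:ℝ)/((k:ℝ)+1))^(2:ℕ) ≤ ((k:ℝ)/((k:ℝ)+1))^(1+c) := by
          rw [← hZ2]; exact hZlow
        calc ((k:ℝ)/(n:ℝ)) ^ (-(1:ℝ)-c) - (((k:ℝ)+1)/(n:ℝ)) ^ (-(1:ℝ)-c)
            = ((k:ℝ)/(n:ℝ)) ^ (-(1:ℝ)-c) * (1 - ((k:ℝ)/((k:ℝ)+1))^(1+c)) := by
              rw [hfac, ez]; ring
          _ ≤ 1 * (1 - ((k:ℝ)/((k:ℝ)+1))^(1+c)) :=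
              mul_le_mul_of_nonneg_right hU1 (by linarith only [hZle1])
          _ = 1 - ((k:ℝ)/((k:ℝ)+1))^(1+c) := one_mul _
          _ ≤ 1 - ((k:ℝ)/((k:ℝ)+1))^(2:ℕ) := by linarith only [hZZ]
          _ ≤ 2/(n:ℝ) := hfrac
      have hE1' : |((k:ℝ)/(n:ℝ))^(-(1:ℝ)-c) - s ^ (-(1:ℝ)-c)| ≤ 2/(n:ℝ) := by
        rw [abs_le]
        constructor
        · linarith only [hmono1, hmono2, hgap1]
        · linarith only [hmono1, hmono2, hgap1]
      -- sandwich bounds, exponent -c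
      have hsmlc : s ^ (-c) ≤ 1 :=
        Real.rpow_le_one_of_one_le_of_nonpos (by linarith only [hsgt1])
          (by linarith only [hc0])
      have hmono1' : s ^ (-c) ≤ ((k:ℝ)/(n:ℝ)) ^ (-c) :=
        Real.rpow_le_rpow_of_nonpos hknpos hs1.le (by linarith only [hc0])
      have hmono2' : (((k:ℝ)+1)/(n:ℝ)) ^ (-c) ≤ s ^ (-c) :=
        Real.rpow_le_rpow_of_nonpos hs0 hs2 (by linarith only [hc0])
      have hgap1' : ((k:ℝ)/(n:ℝ)) ^ (-c) - (((k:ℝ)+1)/(n:ℝ)) ^ (-c) ≤ 1/(n:ℝ) := by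
        have hfac : (((k:ℝ)+1)/(n:ℝ))^(-c)
            = ((k:ℝ)/(n:ℝ))^(-c) * ((((k:ℝ)+1)/(k:ℝ))^(-c)) := by
          rw [efac, Real.mul_rpow hknpos.le (by positivity)]
        have ez : (((k:ℝ)+1)/(k:ℝ))^(-c) = ((k:ℝ)/((k:ℝ)+1))^c := by
          rw [Real.rpow_neg (by positivity), ← Real.inv_rpow (by positivity), inv_div]
        have hZlow : ((k:ℝ)/((k:ℝ)+1))^(1:ℝ) ≤ ((k:ℝ)/((k:ℝ)+1))^c :=
          Real.rpow_le_rpow_of_exponent_ge hz01 hz1 hc1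
        rw [Real.rpow_one] at hZlow
        have e6 : 1 - (k:ℝ)/((k:ℝ)+1) = 1/((k:ℝ)+1) := by
          field_simp; ring
        have h7 : 1/((k:ℝ)+1) ≤ 1/(n:ℝ) := by
          apply one_div_le_one_div_of_le hn'
          linarith only [hkn_le]
        have hU1 : ((k:ℝ)/(n:ℝ))^(-c) ≤ 1 :=
          Real.rpow_le_one_of_one_le_of_nonpos hkn1 (by linarith only [hc0])
        calc ((k:ℝ)/(n:ℝ)) ^ (-c) - (((k:ℝ)+1)/(n:ℝ)) ^ (-c)
            = ((k:ℝ)/(n:ℝ)) ^ (-c) * (1 - ((k:ℝ)/((k:ℝ)+1))^c) := by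
              rw [hfac, ez]; ring
          _ ≤ 1 * (1 - ((k:ℝ)/((k:ℝ)+1))^c) := by
              have hZc1 : ((k:ℝ)/((k:ℝ)+1))^c ≤ 1 :=
                Real.rpow_le_one hz01.le hz1 hc0.le
              exact mul_le_mul_of_nonneg_right hU1 (by linarith only [hZc1])
          _ = 1 - ((k:ℝ)/((k:ℝ)+1))^c := one_mul _
          _ ≤ 1 - (k:ℝ)/((k:ℝ)+1) := by linarith only [hZlow]
          _ = 1/((k:ℝ)+1) := e6
          _ ≤ 1/(n:ℝ) := h7
      have hE2' : |((k:ℝ)/(n:ℝ))^(-c) - s ^ (-c)| ≤ 1/(n:ℝ) := by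
        rw [abs_le]
        constructor
        · linarith only [hmono1', hmono2', hgap1']
        · linarith only [hmono1', hmono2', hgap1']
      -- combine to E1, E2
      have hE1 : |((n:ℝ)/(k:ℝ)) * b - s ^ (-(1:ℝ)-c)| ≤ ε + 2/(n:ℝ) := by
        have t1 : |((n:ℝ)/(k:ℝ)) * b - ((n:ℝ)/(k:ℝ)) * ((n:ℝ)/(k:ℝ))^c| ≤ ε := by
          rw [← mul_sub, abs_mul, abs_of_nonneg hnkpos.le]
          calc ((n:ℝ)/(k:ℝ)) * |b - ((n:ℝ)/(k:ℝ))^c| ≤ 1 * ε :=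
                mul_le_mul hnk1 hA (abs_nonneg _) zero_le_one
            _ = ε := one_mul _
        have t2 : |((n:ℝ)/(k:ℝ)) * ((n:ℝ)/(k:ℝ))^c - s ^ (-(1:ℝ)-c)| ≤ 2/(n:ℝ) := by
          rw [e3]; exact hE1'
        calc |((n:ℝ)/(k:ℝ)) * b - s ^ (-(1:ℝ)-c)|
            ≤ |((n:ℝ)/(k:ℝ)) * b - ((n:ℝ)/(k:ℝ)) * ((n:ℝ)/(k:ℝ))^c|
              + |((n:ℝ)/(k:ℝ)) * ((n:ℝ)/(k:ℝ))^c - s ^ (-(1:ℝ)-c)| := abs_sub_le _ _ _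
          _ ≤ ε + 2/(n:ℝ) := add_le_add t1 t2
      have hE2 : |b - s ^ (-c)| ≤ ε + 1/(n:ℝ) := by
        have t2 : |((n:ℝ)/(k:ℝ))^c - s ^ (-c)| ≤ 1/(n:ℝ) := by
          rw [e3']; exact hE2'
        calc |b - s ^ (-c)|
            ≤ |b - ((n:ℝ)/(k:ℝ))^c| + |((n:ℝ)/(k:ℝ))^c - s ^ (-c)| := abs_sub_le _ _ _
          _ ≤ ε + 1/(n:ℝ) := add_le_add hA t2
      -- the difference identity
      have hqs : q s x = x * s^(-(1:ℝ)-c) * p1 (-(x * s^(-c))) := by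
        rw [hq s x, neg_mul]
      have hiden : V - q s x
          = x * (((n:ℝ)/(k:ℝ)) * b - s^(-(1:ℝ)-c)) * p1 (-(x*b))
            + x * s^(-(1:ℝ)-c) * (p1 (-(x*b)) - p1 (-(x * s^(-c)))) := by
        rw [hVdef, hqs]; ring
      have habs1 : |p1 (-(x*b))| ≤ M := by
        rw [abs_of_nonneg (hnonneg _)]; exact hbdd _
      have hlipb : |p1 (-(x*b)) - p1 (-(x * s^(-c)))| ≤ M' * (x * (ε + 1/(n:ℝ))) := by
        calc |p1 (-(x*b)) - p1 (-(x * s^(-c)))| ≤ M' * |(-(x*b)) - (-(x * s^(-c)))| :=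
              hlip _ _
          _ = M' * (x * |b - s^(-c)|) := by
              rw [show (-(x*b)) - (-(x * s^(-c))) = x * (s^(-c) - b) by ring, abs_mul,
                abs_of_nonneg hx0, abs_sub_comm]
          _ ≤ M' * (x * (ε + 1/(n:ℝ))) := by
              apply mul_le_mul_of_nonneg_left _ hM'
              exact mul_le_mul_of_nonneg_left hE2 hx0
      have hone2 : (1:ℝ)/(n:ℝ) ≤ 2/(n:ℝ) := by gcongr <;> norm_num
      have hT1 : |x * (((n:ℝ)/(k:ℝ)) * b - s^(-(1:ℝ)-c)) * p1 (-(x*b))|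
          ≤ α * M * (ε + 2/(n:ℝ)) := by
        rw [abs_mul, abs_mul, abs_of_nonneg hx0]
        calc x * |((n:ℝ)/(k:ℝ)) * b - s^(-(1:ℝ)-c)| * |p1 (-(x*b))|
            ≤ (α * (ε + 2/(n:ℝ))) * M := by
              apply mul_le_mul _ habs1 (abs_nonneg _) (by positivity)
              exact mul_le_mul hxα hE1 (abs_nonneg _) hα.le
          _ = α * M * (ε + 2/(n:ℝ)) := by ring
      have hT2 : |x * s^(-(1:ℝ)-c) * (p1 (-(x*b)) - p1 (-(x * s^(-c))))|
          ≤ α * α * M' * (ε + 2/(n:ℝ)) := by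
        rw [abs_mul, abs_mul, abs_of_nonneg hx0, abs_of_nonneg hsml0]
        calc x * s^(-(1:ℝ)-c) * |p1 (-(x*b)) - p1 (-(x * s^(-c)))|
            ≤ (α * 1) * (M' * (α * (ε + 2/(n:ℝ)))) := by
              apply mul_le_mul (mul_le_mul hxα hsml hsml0 hα.le) _ (abs_nonneg _)
                (by positivity)
              calc |p1 (-(x*b)) - p1 (-(x * s^(-c)))| ≤ M' * (x * (ε + 1/(n:ℝ))) := hlipb
                _ ≤ M' * (α * (ε + 2/(n:ℝ))) := by
                    apply mul_le_mul_of_nonneg_left _ hM'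
                    apply mul_le_mul hxα (by linarith only [hone2, hε]) (by positivity) hα.le
          _ = α * α * M' * (ε + 2/(n:ℝ)) := by ring
      have hCexp : C₁ * (ε + 2/(n:ℝ))
          = α * M * (ε + 2/(n:ℝ)) + α * α * M' * (ε + 2/(n:ℝ)) + (ε + 2/(n:ℝ)) := by
        rw [hC₁def]; ring
      have hpos2n : (0:ℝ) < ε + 2/(n:ℝ) := by positivity
      calc |V - q s x| ≤ |x * (((n:ℝ)/(k:ℝ)) * b - s^(-(1:ℝ)-c)) * p1 (-(x*b))|
            + |x * s^(-(1:ℝ)-c) * (p1 (-(x*b)) - p1 (-(x * s^(-c))))| := by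
            rw [hiden]; exact abs_add_le _ _
        _ ≤ C₁ * (ε + 2/(n:ℝ)) := by
            rw [hCexp]
            linarith only [hT1, hT2, hpos2n]
    -- conclude the per-interval bound
    have hdiff_eq : f k - ∫ s in (a i)..(a (i+1)), q s x
        = ∫ s in (a i)..(a (i+1)), (V - q s x) := by
      rw [intervalIntegral.integral_sub intervalIntegrable_const (hint i),
        intervalIntegral.integral_const, hlen, smul_eq_mul, hfkV]
    rw [hdiff_eq]
    have hnormle := intervalIntegral.norm_integral_le_of_norm_le_const
      (C := C₁ * (ε + 2/(n:ℝ))) (f := fun s => V - q s x) (a := a i) (b := a (i+1)) ?_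
    · rw [Real.norm_eq_abs] at hnormle
      calc |∫ s in (a i)..(a (i+1)), (V - q s x)|
          ≤ C₁ * (ε + 2/(n:ℝ)) * |a (i+1) - a i| := hnormle
        _ = (C₁ * (ε + 2/(n:ℝ))) * (1/(n:ℝ)) := by
            rw [hlen, abs_of_pos (by positivity : (0:ℝ) < 1/(n:ℝ))]
    · intro s hs
      rw [Set.uIoc_of_le (ha_mono i)] at hs
      rw [Real.norm_eq_abs]
      exact hptwise s hs
  -- sum the per-interval bounds
  have hmain_bound : |(∑ i ∈ Finset.range m', f (n + i))
      - ∑ i ∈ Finset.range m', (∫ s in (a i)..(a (i+1)), q s x)| < η/4 := by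
    have h1 : |∑ i ∈ Finset.range m', (f (n + i) - ∫ s in (a i)..(a (i+1)), q s x)|
        ≤ ∑ i ∈ Finset.range m', |f (n + i) - ∫ s in (a i)..(a (i+1)), q s x| :=
      Finset.abs_sum_le_sum_abs _ _
    have h2 : ∑ i ∈ Finset.range m', |f (n + i) - ∫ s in (a i)..(a (i+1)), q s x|
        ≤ (m' : ℝ) * ((C₁ * (ε + 2/(n:ℝ))) * (1/(n:ℝ))) := by
      have := Finset.sum_le_card_nsmul (Finset.range m')
        (fun i => |f (n + i) - ∫ s in (a i)..(a (i+1)), q s x|)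
        ((C₁ * (ε + 2/(n:ℝ))) * (1/(n:ℝ))) hper
      rw [Finset.card_range] at this
      rwa [nsmul_eq_mul] at this
    have hKCe : (K:ℝ) * C₁ * ε = η/8 := by
      rw [hεdef]
      field_simp
    have h2n : 2 * (K:ℝ) * C₁ / (n:ℝ) < η/8 := by
      have hN₀' : 16 * (K:ℝ) * C₁ / η < (n:ℝ) := by
        calc 16 * (K:ℝ) * C₁ / η < (N₀:ℝ) := hN₀
          _ ≤ (n:ℝ) := by exact_mod_cast hnN₀
      rw [div_lt_iff₀ hη] at hN₀'
      rw [div_lt_iff₀ hn']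
      calc 2 * (K:ℝ) * C₁ = (16 * (K:ℝ) * C₁)/8 := by ring
        _ < ((n:ℝ) * η)/8 := by gcongr
        _ = η/8 * (n:ℝ) := by ring
    have h3 : (m' : ℝ) * ((C₁ * (ε + 2/(n:ℝ))) * (1/(n:ℝ))) < η/4 := by
      have hm'cast : (m' : ℝ) = (((K':ℕ):ℝ) + 1) * (n:ℝ) := by
        rw [hm'def]; push_cast; ring
      have hKK' : ((K':ℕ):ℝ) + 1 ≤ (K:ℝ) := by
        rw [hKdef]; push_cast; linarith
      have e7 : (m' : ℝ) * ((C₁ * (ε + 2/(n:ℝ))) * (1/(n:ℝ)))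
          = (((K':ℕ):ℝ) + 1) * (C₁ * (ε + 2/(n:ℝ))) := by
        rw [hm'cast]
        field_simp
      calc (m' : ℝ) * ((C₁ * (ε + 2/(n:ℝ))) * (1/(n:ℝ)))
          = (((K':ℕ):ℝ) + 1) * (C₁ * (ε + 2/(n:ℝ))) := e7
        _ ≤ (K:ℝ) * (C₁ * (ε + 2/(n:ℝ))) := by
            apply mul_le_mul_of_nonneg_right hKK' (by positivity)
        _ = (K:ℝ) * C₁ * ε + 2 * (K:ℝ) * C₁ / (n:ℝ) := by
            field_simp
        _ < η/8 + η/8 := by rw [hKCe]; linarith only [h2n]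
        _ = η/4 := by ring
    calc |(∑ i ∈ Finset.range m', f (n + i))
        - ∑ i ∈ Finset.range m', (∫ s in (a i)..(a (i+1)), q s x)|
        = |∑ i ∈ Finset.range m', (f (n + i) - ∫ s in (a i)..(a (i+1)), q s x)| := by
          rw [Finset.sum_sub_distrib]
      _ ≤ ∑ i ∈ Finset.range m', |f (n + i) - ∫ s in (a i)..(a (i+1)), q s x| := h1
      _ ≤ (m' : ℝ) * ((C₁ * (ε + 2/(n:ℝ))) * (1/(n:ℝ))) := h2
      _ < η/4 := h3
  -- final assembly
  rw [htsum_eq, hsplit_sum, hsplit_int, ← hIoc]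
  have hS2 : |∑' i : ℕ, f (n + (i + m'))| < η/4 := by
    rw [abs_of_nonneg htail_nonneg]
    exact lt_of_le_of_lt htail_le hKτ
  have hI2 : |∫ s in Set.Ioi (K:ℝ), q s x| < η/4 := lt_of_le_of_lt hItail hKι
  set S1 := ∑ i ∈ Finset.range m', f (n + i)
  set S2 := ∑' i : ℕ, f (n + (i + m'))
  set I1 := ∑ i ∈ Finset.range m', (∫ s in (a i)..(a (i+1)), q s x)
  set I2 := ∫ s in Set.Ioi (K:ℝ), q s x
  calc |S1 + S2 - (I1 + I2)| = |(S1 - I1) + (S2 - I2)| := by ring_nf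
    _ ≤ |S1 - I1| + |S2 - I2| := abs_add_le _ _
    _ ≤ |S1 - I1| + (|S2| + |I2|) := by
        have h9 : |S2 - I2| ≤ |S2| + |I2| := abs_sub _ _
        linarith only [h9]
    _ < η/4 + (η/4 + η/4) := by
        linarith only [hmain_bound, hS2, hI2, abs_nonneg (S1 - I1), abs_nonneg S2, abs_nonneg I2]
    _ < η := by linarith only [hη]
end
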